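/- arXiv:2007.02618 — 9 statements merged into one kernel-verified Lean document; each statement's English description precedes it below -/
import Mathlib

section
/- Let A₁ ∈ ℝ^{n₁×n₁} and A₂ ∈ ℝ^{n₂×n₂} be irreducible nonnegative square matrices and let A = A₁ ⊕ A₂ be their direct sum (block diagonal matrix). Suppose there exists t* ∈ (0,1) such that (1) ρ((1−t*)A₁ + t*A₁ᵀ) = ρ((1−t*)A₂ + t*A₂ᵀ), and (2) the derivatives at t = t* of t ↦ ρ((1−t)A₁ + tA₁ᵀ) and of t ↦ ρ((1−t)A₂ + tA₂ᵀ) are unequal. Then the function r(t) := ρ((1−t)A + tAᵀ) is not concave on (0,1). -/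
open Matrix

/-- The spectral radius of a real square matrix: the maximum modulus of its
(complex) eigenvalues. -/
noncomputable def specRad {m : Type*} [Fintype m] [DecidableEq m]
    (M : Matrix m m ℝ) : ℝ :=
  (spectralRadius ℂ (M.map (fun x : ℝ => (x : ℂ)))).toReal

/-- A square matrix is irreducible if its associated directed graph is strongly
connected, i.e. for every pair of indices `i j` some power of the matrix has a
positive `(i,j)` entry. -/
def Irred {m : Type*} [Fintype m] [DecidableEq m] (M : Matrix m m ℝ) : Prop :=
  ∀ i j : m, ∃ k : ℕ, 0 < (M ^ (k + 1)) i j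

section Aux

open Filter Topology Set Polynomial

lemma mem_spectrum_iff_isRoot' {n : Type*} [Fintype n] [DecidableEq n]
    (M : Matrix n n ℂ) (μ : ℂ) : μ ∈ spectrum ℂ M ↔ M.charpoly.IsRoot μ := by
  rw [spectrum.mem_iff, Matrix.isUnit_iff_isUnit_det, isUnit_iff_ne_zero, not_not,
    Polynomial.IsRoot, Matrix.charpoly, eval_det, matPolyEquiv_charmatrix]
  simp [Algebra.algebraMap_eq_smul_one, smul_one_eq_diagonal]

lemma spectrum_fromBlocks' {n₁ n₂ : Type*} [Fintype n₁] [DecidableEq n₁]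
    [Fintype n₂] [DecidableEq n₂] (B : Matrix n₁ n₁ ℂ) (C : Matrix n₂ n₂ ℂ) :
    spectrum ℂ (fromBlocks B 0 0 C) = spectrum ℂ B ∪ spectrum ℂ C := by
  ext μ
  simp only [mem_spectrum_iff_isRoot', Set.mem_union, Matrix.charpoly_fromBlocks_zero₁₂,
    Polynomial.IsRoot, Polynomial.eval_mul, mul_eq_zero]

lemma spectralRadius_matrix_ne_top {n : Type*} [Fintype n] [DecidableEq n]
    (M : Matrix n n ℂ) : spectralRadius ℂ M ≠ ⊤ := by
  have hfin := Matrix.finite_spectrum M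
  rw [← lt_top_iff_ne_top, spectralRadius]
  calc (⨆ k ∈ spectrum ℂ M, (‖k‖₊ : ENNReal))
      ≤ ↑(hfin.toFinset.sup fun k => ‖k‖₊) := by
        refine iSup₂_le fun k hk => ?_
        exact_mod_cast ENNReal.coe_le_coe.2 (Finset.le_sup (hfin.mem_toFinset.2 hk))
    _ < ⊤ := ENNReal.coe_lt_top

lemma specRad_fromBlocks {n₁ n₂ : ℕ} (B : Matrix (Fin n₁) (Fin n₁) ℝ)
    (C : Matrix (Fin n₂) (Fin n₂) ℝ) :
    specRad (fromBlocks B 0 0 C) = max (specRad B) (specRad C) := by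
  unfold specRad
  have hmap : (fromBlocks B 0 0 C).map (fun x : ℝ => (x : ℂ))
      = fromBlocks (B.map (fun x : ℝ => (x : ℂ))) 0 0 (C.map (fun x : ℝ => (x : ℂ))) := by
    simp [Matrix.fromBlocks_map]
  rw [hmap]
  rw [show spectralRadius ℂ (fromBlocks (B.map (fun x : ℝ => (x : ℂ))) 0 0
      (C.map (fun x : ℝ => (x : ℂ)))) = spectralRadius ℂ (B.map (fun x : ℝ => (x : ℂ)))
      ⊔ spectralRadius ℂ (C.map (fun x : ℝ => (x : ℂ))) by
    simp only [spectralRadius, spectrum_fromBlocks', iSup_union]]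
  exact ENNReal.toReal_sup (spectralRadius_matrix_ne_top _) (spectralRadius_matrix_ne_top _)

lemma not_concaveOn_max {f g : ℝ → ℝ} {t s₁ s₂ : ℝ} (ht : t ∈ Set.Ioo (0:ℝ) 1)
    (heq : f t = g t) (hf : HasDerivAt f s₁ t) (hg : HasDerivAt g s₂ t)
    (hlt : s₂ < s₁) : ¬ ConcaveOn ℝ (Set.Ioo (0:ℝ) 1) (fun x => max (f x) (g x)) := by
  intro hcon
  set φ : ℝ → ℝ := fun ε => f (t + ε) + g (t - ε) with hφdef
  have hu1 : HasDerivAt (fun ε : ℝ => t + ε) 1 0 := by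
    simpa using (hasDerivAt_id (0:ℝ)).const_add t
  have hu2 : HasDerivAt (fun ε : ℝ => t - ε) (-1) 0 := by
    exact (hasDerivAt_id (0:ℝ)).const_sub t
  have hf0 : HasDerivAt f s₁ ((fun ε : ℝ => t + ε) 0) := by simpa using hf
  have hg0 : HasDerivAt g s₂ ((fun ε : ℝ => t - ε) 0) := by simpa using hg
  have h1 : HasDerivAt (fun ε : ℝ => f (t + ε)) s₁ 0 := by
    have := hf0.comp 0 hu1; rw [mul_one] at this; exact this
  have h2 : HasDerivAt (fun ε : ℝ => g (t - ε)) (-s₂) 0 := by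
    have := hg0.comp 0 hu2; rw [mul_neg, mul_one] at this; exact this
  have hφ : HasDerivAt φ (s₁ - s₂) 0 := by
    rw [sub_eq_add_neg]; exact h1.add h2
  have hslope : Tendsto (slope φ 0) (𝓝[≠] 0) (𝓝 (s₁ - s₂)) :=
    hasDerivAt_iff_tendsto_slope.1 hφ
  have hpos : ∀ᶠ ε in 𝓝[≠] (0:ℝ), 0 < slope φ 0 ε :=
    hslope.eventually (eventually_gt_nhds (by linarith))
  have hpos' : ∀ᶠ ε in 𝓝[>] (0:ℝ), φ 0 < φ ε := by
    filter_upwards [hpos.filter_mono (nhdsWithin_mono 0 (fun x hx => ne_of_gt hx)),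
      self_mem_nhdsWithin] with ε hε hε0
    have hs : slope φ 0 ε = (φ ε - φ 0) / ε := by simp [slope_def_field]
    rw [hs] at hε
    rcases div_pos_iff.mp hε with ⟨h, _⟩ | ⟨_, h⟩
    · linarith
    · exact absurd hε0 (by simp at h ⊢; linarith)
  have hmem : ∀ᶠ ε in 𝓝 (0:ℝ), t + ε ∈ Set.Ioo (0:ℝ) 1 ∧ t - ε ∈ Set.Ioo (0:ℝ) 1 := by
    have ht1 : Tendsto (fun ε : ℝ => t + ε) (𝓝 0) (𝓝 t) := by
      simpa using (continuous_add_left t).tendsto (0:ℝ)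
    have ht2 : Tendsto (fun ε : ℝ => t - ε) (𝓝 0) (𝓝 t) := by
      convert ((continuous_const (y := t)).sub continuous_id).tendsto (0:ℝ) using 2 <;> simp
    exact (ht1.eventually (isOpen_Ioo.mem_nhds ht)).and
      (ht2.eventually (isOpen_Ioo.mem_nhds ht))
  obtain ⟨ε, ⟨hm1, hm2⟩, hgt⟩ :=
    ((hmem.filter_mono nhdsWithin_le_nhds).and hpos').exists
  have hc := hcon.2 hm1 hm2 (by norm_num : (0:ℝ) ≤ 1/2) (by norm_num : (0:ℝ) ≤ 1/2)
    (by norm_num : (1:ℝ)/2 + 1/2 = 1)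
  have hpt : (1/2:ℝ) • (t + ε) + (1/2:ℝ) • (t - ε) = t := by
    simp [smul_eq_mul]; ring
  rw [hpt] at hc
  simp only [smul_eq_mul] at hc
  have hmax : max (f t) (g t) = f t := by rw [heq, max_self]
  have l1 : f (t + ε) ≤ max (f (t + ε)) (g (t + ε)) := le_max_left _ _
  have l2 : g (t - ε) ≤ max (f (t - ε)) (g (t - ε)) := le_max_right _ _
  have hφ0 : φ 0 = f t + g t := by simp [hφdef]
  have hφε : φ ε = f (t + ε) + g (t - ε) := rfl
  rw [hφ0, hφε] at hgt
  rw [hmax] at hc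
  linarith

end Aux

/-- If the Levinger functions of two irreducible nonnegative blocks cross at
`t* ∈ (0,1)` with unequal derivatives there, then the Levinger function of the
direct sum `A₁ ⊕ A₂` is not concave on `(0,1)`. -/
theorem levinger_directSum_not_concave {n₁ n₂ : ℕ}
    (A₁ : Matrix (Fin n₁) (Fin n₁) ℝ) (A₂ : Matrix (Fin n₂) (Fin n₂) ℝ)
    (hA₁nn : ∀ i j, 0 ≤ A₁ i j) (hA₂nn : ∀ i j, 0 ≤ A₂ i j)
    (hA₁irr : Irred A₁) (hA₂irr : Irred A₂)
    (tstar : ℝ) (htstar : tstar ∈ Set.Ioo (0:ℝ) 1)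
    (heq : specRad ((1 - tstar) • A₁ + tstar • A₁ᵀ)
         = specRad ((1 - tstar) • A₂ + tstar • A₂ᵀ))
    (s₁ s₂ : ℝ)
    (hd₁ : HasDerivAt (fun t : ℝ => specRad ((1 - t) • A₁ + t • A₁ᵀ)) s₁ tstar)
    (hd₂ : HasDerivAt (fun t : ℝ => specRad ((1 - t) • A₂ + t • A₂ᵀ)) s₂ tstar)
    (hne : s₁ ≠ s₂) :
    ¬ ConcaveOn ℝ (Set.Ioo (0:ℝ) 1)
      (fun t : ℝ => specRad ((1 - t) • (Matrix.fromBlocks A₁ 0 0 A₂)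
        + t • (Matrix.fromBlocks A₁ 0 0 A₂)ᵀ)) := by
  have hfun : (fun t : ℝ => specRad ((1 - t) • (Matrix.fromBlocks A₁ 0 0 A₂)
        + t • (Matrix.fromBlocks A₁ 0 0 A₂)ᵀ))
      = fun t : ℝ => max (specRad ((1 - t) • A₁ + t • A₁ᵀ))
          (specRad ((1 - t) • A₂ + t • A₂ᵀ)) := by
    funext t
    have hb : (1 - t) • (Matrix.fromBlocks A₁ 0 0 A₂)
        + t • (Matrix.fromBlocks A₁ 0 0 A₂)ᵀ
        = Matrix.fromBlocks ((1 - t) • A₁ + t • A₁ᵀ) 0 0 ((1 - t) • A₂ + t • A₂ᵀ) := by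
      simp [Matrix.fromBlocks_transpose, Matrix.fromBlocks_smul, Matrix.fromBlocks_add]
    rw [hb, specRad_fromBlocks]
  rw [hfun]
  rcases lt_or_gt_of_ne hne with h | h
  · have := not_concaveOn_max htstar heq.symm hd₂ hd₁ h
    intro hcon
    exact this (by convert hcon using 2; rw [max_comm])
  · exact not_concaveOn_max htstar heq hd₁ hd₂ h
end

section
/- Let A ∈ ℝ^{2×2} be nonnegative and irreducible. Then Levinger's function r(t) := ρ((1−t)A + tAᵀ) is concave on t ∈ (0,1), and strictly concave when the left and right Perron–Frobenius eigenvectors of A are not colinear (equivalently, when the two off-diagonal entries of A are unequal). -/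
open Matrix

lemma spectrum_fin_two (M : Matrix (Fin 2) (Fin 2) ℂ) (z : ℂ) :
    z ∈ spectrum ℂ M ↔ (z - M 0 0) * (z - M 1 1) - M 0 1 * M 1 0 = 0 := by
  rw [spectrum.mem_iff, Matrix.isUnit_iff_isUnit_det, isUnit_iff_ne_zero, not_ne_iff,
    Matrix.det_fin_two]
  simp [Algebra.algebraMap_eq_smul_one, Matrix.sub_apply, Matrix.smul_apply, Matrix.one_apply]

lemma specRad_fin_two (M : Matrix (Fin 2) (Fin 2) ℝ)
    (htr : 0 ≤ M 0 0 + M 1 1)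
    (hdisc : 0 ≤ (M 0 0 - M 1 1)^2 + 4 * (M 0 1 * M 1 0)) :
    specRad M
      = (M 0 0 + M 1 1 + Real.sqrt ((M 0 0 - M 1 1)^2 + 4 * (M 0 1 * M 1 0))) / 2 := by
  set Δ : ℝ := (M 0 0 - M 1 1)^2 + 4 * (M 0 1 * M 1 0) with hΔ
  set r : ℝ := Real.sqrt Δ with hrdef
  have hr0 : 0 ≤ r := Real.sqrt_nonneg _
  have hr2 : r ^ 2 = Δ := Real.sq_sqrt hdisc
  set lp : ℝ := (M 0 0 + M 1 1 + r) / 2 with hlp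
  set lm : ℝ := (M 0 0 + M 1 1 - r) / 2 with hlm
  have hspec : spectrum ℂ (M.map (fun x : ℝ => (x : ℂ))) = {(lp : ℂ), (lm : ℂ)} := by
    ext z
    rw [spectrum_fin_two]
    simp only [Matrix.map_apply]
    have hfac : (z - (M 0 0 : ℂ)) * (z - (M 1 1 : ℂ)) - (M 0 1 : ℂ) * (M 1 0 : ℂ)
        = (z - (lp : ℂ)) * (z - (lm : ℂ)) := by
      have : ((r : ℂ)) ^ 2 = ((M 0 0 : ℂ) - M 1 1)^2 + 4 * ((M 0 1 : ℂ) * M 1 0) := by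
        exact_mod_cast congrArg (fun x : ℝ => (x : ℂ)) hr2
      rw [hlp, hlm]
      push_cast
      linear_combination (1/4 : ℂ) * this
    rw [hfac, mul_eq_zero, sub_eq_zero, sub_eq_zero]
    simp [Set.mem_insert_iff]
  have hlm_le : ‖lm‖₊ ≤ ‖lp‖₊ := by
    rw [← NNReal.coe_le_coe]
    simp only [coe_nnnorm, Real.norm_eq_abs]
    rw [abs_le]
    constructor
    · rw [abs_of_nonneg (by positivity)]
      simp only [hlp, hlm]; linarith
    · rw [abs_of_nonneg (by positivity)]
      simp only [hlp, hlm]; linarith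
  have hlp0 : 0 ≤ lp := by positivity
  rw [specRad, spectralRadius, hspec, iSup_pair]
  simp only [Complex.nnnorm_real]
  rw [sup_eq_left.mpr (ENNReal.coe_le_coe.mpr hlm_le), ENNReal.coe_toReal, coe_nnnorm,
    Real.norm_eq_abs, abs_of_nonneg hlp0]

lemma sqrt_combo {X Y Z p q : ℝ} (hX : 0 ≤ X) (hY : 0 ≤ Y) (hp : 0 ≤ p) (hq : 0 ≤ q)
    (hpq : p + q = 1) (hZ : p * X + q * Y ≤ Z) :
    p * Real.sqrt X + q * Real.sqrt Y ≤ Real.sqrt Z := by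
  have h1 : 0 ≤ p * Real.sqrt X + q * Real.sqrt Y := by positivity
  have hZ0 : 0 ≤ Z := le_trans (by positivity) hZ
  rw [Real.le_sqrt h1 hZ0]
  have hx2 := Real.sq_sqrt hX
  have hy2 := Real.sq_sqrt hY
  have e : (p * Real.sqrt X + q * Real.sqrt Y) ^ 2
      = p * X + q * Y - p * q * (Real.sqrt X - Real.sqrt Y) ^ 2 := by
    linear_combination (p * Real.sqrt X ^ 2 + q * Real.sqrt Y ^ 2) * hpq + p * hx2 + q * hy2
  rw [e]
  have := mul_nonneg (mul_nonneg hp hq) (sq_nonneg (Real.sqrt X - Real.sqrt Y))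
  linarith

lemma sqrt_combo_lt {X Y Z p q : ℝ} (hX : 0 ≤ X) (hY : 0 ≤ Y) (hp : 0 ≤ p) (hq : 0 ≤ q)
    (hpq : p + q = 1) (hZ : p * X + q * Y < Z) :
    p * Real.sqrt X + q * Real.sqrt Y < Real.sqrt Z := by
  have h1 : 0 ≤ p * Real.sqrt X + q * Real.sqrt Y := by positivity
  rw [Real.lt_sqrt h1]
  have hx2 := Real.sq_sqrt hX
  have hy2 := Real.sq_sqrt hY
  have e : (p * Real.sqrt X + q * Real.sqrt Y) ^ 2
      = p * X + q * Y - p * q * (Real.sqrt X - Real.sqrt Y) ^ 2 := by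
    linear_combination (p * Real.sqrt X ^ 2 + q * Real.sqrt Y ^ 2) * hpq + p * hx2 + q * hy2
  rw [e]
  have := mul_nonneg (mul_nonneg hp hq) (sq_nonneg (Real.sqrt X - Real.sqrt Y))
  linarith

lemma pow_entry_zero (A : Matrix (Fin 2) (Fin 2) ℝ) (i j : Fin 2) (hij : i ≠ j)
    (h0 : A i j = 0) : ∀ n : ℕ, (A ^ n) i j = 0 := by
  intro n
  induction n with
  | zero => simp [Matrix.one_apply, hij]
  | succ n ih =>
    rw [pow_succ, Matrix.mul_apply, Fin.sum_univ_two]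
    fin_cases i <;> fin_cases j <;> simp_all

/-- Levinger's function of a nonnegative irreducible `2 × 2` matrix is concave
on `(0,1)`, and strictly concave when the two off-diagonal entries are unequal
(equivalently, when the left and right Perron vectors are not colinear). -/
theorem levinger_concave_two_by_two (A : Matrix (Fin 2) (Fin 2) ℝ)
    (hnn : ∀ i j, 0 ≤ A i j) (hirr : Irred A) :
    ConcaveOn ℝ (Set.Ioo (0:ℝ) 1)
      (fun t : ℝ => specRad ((1 - t) • A + t • Aᵀ)) ∧
    (A 0 1 ≠ A 1 0 →
      StrictConcaveOn ℝ (Set.Ioo (0:ℝ) 1)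
        (fun t : ℝ => specRad ((1 - t) • A + t • Aᵀ))) := by
  have hoff : ∀ i j : Fin 2, i ≠ j → 0 < A i j := by
    intro i j hij
    rcases lt_or_eq_of_le (hnn i j) with h | h
    · exact h
    · exfalso
      obtain ⟨k, hk⟩ := hirr i j
      rw [pow_entry_zero A i j hij h.symm (k + 1)] at hk
      exact lt_irrefl 0 hk
  have hb : 0 < A 0 1 := hoff 0 1 (by decide)
  have hc : 0 < A 1 0 := hoff 1 0 (by decide)
  set a := A 0 0 with ha
  set d := A 1 1 with hd
  set b := A 0 1 with hbdef
  set c := A 1 0 with hcdef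
  set K : ℝ := (a - d) ^ 2 + 4 * (b * c) with hK
  set C : ℝ := 4 * (b - c) ^ 2 with hC
  have hKpos : 0 < K := by nlinarith [sq_nonneg (a - d)]
  have hCnn : 0 ≤ C := by positivity
  -- the explicit formula on (0,1)
  have key : ∀ t ∈ Set.Ioo (0:ℝ) 1,
      specRad ((1 - t) • A + t • Aᵀ)
        = (a + d + Real.sqrt (K + C * (t * (1 - t)))) / 2 := by
    intro t ht
    obtain ⟨ht0, ht1⟩ := ht
    set B := (1 - t) • A + t • Aᵀ with hB
    have e00 : B 0 0 = a := by simp [hB, Matrix.add_apply, Matrix.smul_apply]; ring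
    have e11 : B 1 1 = d := by simp [hB, Matrix.add_apply, Matrix.smul_apply]; ring
    have e01 : B 0 1 = (1 - t) * b + t * c := by
      simp [hB, Matrix.add_apply, Matrix.smul_apply, Matrix.transpose_apply]; rfl
    have e10 : B 1 0 = (1 - t) * c + t * b := by
      simp [hB, Matrix.add_apply, Matrix.smul_apply, Matrix.transpose_apply]; rfl
    have hu : 0 < (1 - t) * b + t * c := by nlinarith
    have hv : 0 < (1 - t) * c + t * b := by nlinarith
    rw [specRad_fin_two B (by rw [e00, e11]; linarith [hnn 0 0, hnn 1 1])
      (by rw [e00, e11, e01, e10]; nlinarith [sq_nonneg (a - d)])]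
    rw [e00, e11, e01, e10]
    have : (a - d) ^ 2 + 4 * (((1 - t) * b + t * c) * ((1 - t) * c + t * b))
        = K + C * (t * (1 - t)) := by rw [hK, hC]; ring
    rw [this]
  have hIoo : Convex ℝ (Set.Ioo (0:ℝ) 1) := convex_Ioo 0 1
  have harg : ∀ t ∈ Set.Ioo (0:ℝ) 1, 0 ≤ K + C * (t * (1 - t)) := by
    intro t ⟨h0, h1⟩
    have : 0 ≤ t * (1 - t) := by nlinarith
    nlinarith
  constructor
  · refine ⟨hIoo, ?_⟩
    intro x hx y hy p q hp hq hpq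
    have hq2 : q = 1 - p := by linarith
    subst hq2
    have hz : p • x + (1 - p) • y ∈ Set.Ioo (0:ℝ) 1 := hIoo hx hy hp hq hpq
    simp only [smul_eq_mul] at hz ⊢
    rw [key x hx, key y hy, key _ hz]
    have hid : K + C * ((p * x + (1 - p) * y) * (1 - (p * x + (1 - p) * y)))
        - (p * (K + C * (x * (1 - x))) + (1 - p) * (K + C * (y * (1 - y))))
        = C * (p * (1 - p) * (x - y) ^ 2) := by ring
    have hrhs : 0 ≤ C * (p * (1 - p) * (x - y) ^ 2) :=
      mul_nonneg hCnn (mul_nonneg (mul_nonneg hp hq) (sq_nonneg _))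
    have hcombo : p * (K + C * (x * (1 - x))) + (1 - p) * (K + C * (y * (1 - y)))
        ≤ K + C * ((p * x + (1 - p) * y) * (1 - (p * x + (1 - p) * y))) := by linarith
    have := sqrt_combo (harg x hx) (harg y hy) hp hq hpq hcombo
    nlinarith [this]
  · intro hne
    have hCpos : 0 < C := by
      rw [hC]
      have : b - c ≠ 0 := sub_ne_zero.mpr hne
      positivity
    refine ⟨hIoo, ?_⟩
    intro x hx y hy hxy p q hp hq hpq
    have hq2 : q = 1 - p := by linarith
    subst hq2
    have hz : p • x + (1 - p) • y ∈ Set.Ioo (0:ℝ) 1 := hIoo hx hy hp.le hq.le hpq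
    simp only [smul_eq_mul] at hz ⊢
    rw [key x hx, key y hy, key _ hz]
    have hid : K + C * ((p * x + (1 - p) * y) * (1 - (p * x + (1 - p) * y)))
        - (p * (K + C * (x * (1 - x))) + (1 - p) * (K + C * (y * (1 - y))))
        = C * (p * (1 - p) * (x - y) ^ 2) := by ring
    have hrhs : 0 < C * (p * (1 - p) * (x - y) ^ 2) :=
      mul_pos hCpos (mul_pos (mul_pos hp hq) (sq_pos_of_ne_zero (sub_ne_zero.mpr hxy)))
    have hcombo : p * (K + C * (x * (1 - x))) + (1 - p) * (K + C * (y * (1 - y)))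
        < K + C * ((p * x + (1 - p) * y) * (1 - (p * x + (1 - p) * y))) := by linarith
    have := sqrt_combo_lt (harg x hx) (harg y hy) hp.le hq.le hpq hcombo
    nlinarith [this]
end

section
/- Let A ∈ ℝ^{n×n}, n ≥ 2, be a tridiagonal Toeplitz matrix with diagonal entries b ≥ 0, subdiagonal entries a ≥ 0, and superdiagonal entries c ≥ 0, with max(a, c) > 0. Then for t ∈ (0,1), the function r(t) := ρ((1−t)A + tAᵀ) is concave in t, increasing on (0, 1/2), and decreasing on (1/2, 1), all strictly when a ≠ c. -/
open Matrix

namespace LevAux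

lemma spectrum_of_conj {n : ℕ} (M P Q : Matrix (Fin n) (Fin n) ℂ)
    (hPQ : P * Q = 1) (hQP : Q * P = 1) (v : Fin n → ℂ)
    (hM : M = P * diagonal v * Q) :
    spectrum ℂ M = Set.range v := by
  let u : (Matrix (Fin n) (Fin n) ℂ)ˣ := ⟨P, Q, hPQ, hQP⟩
  have hQ : Q = ↑u⁻¹ := rfl
  rw [hM, hQ, show P = ↑u from rfl, spectrum.units_conjugate, spectrum_diagonal]

lemma specRad_eq_abs {n : ℕ} (M : Matrix (Fin n) (Fin n) ℝ) (w : Fin n → ℝ)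
    (h : spectrum ℂ (M.map (fun x : ℝ => (x : ℂ))) = Set.range (fun i => (w i : ℂ)))
    (i0 : Fin n) (hmax : ∀ i, |w i| ≤ |w i0|) : specRad M = |w i0| := by
  have hns : ∀ i : Fin n, ‖((w i : ℂ))‖₊ = ‖w i‖₊ := by
    intro i; simp [nnnorm, Complex.norm_real]
  have key : spectralRadius ℂ (M.map (fun x : ℝ => (x : ℂ))) = (‖w i0‖₊ : ENNReal) := by
    rw [spectralRadius, h]
    apply le_antisymm
    · refine iSup_le fun z => iSup_le fun hz => ?_
      obtain ⟨i, rfl⟩ := hz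
      rw [hns i]
      exact_mod_cast (by rw [← NNReal.coe_le_coe, coe_nnnorm, coe_nnnorm, Real.norm_eq_abs, Real.norm_eq_abs]; exact hmax i : ‖w i‖₊ ≤ ‖w i0‖₊)
    · refine le_trans ?_ (le_iSup₂ (f := fun z _ => (‖z‖₊ : ENNReal)) ((w i0 : ℂ)) ⟨i0, rfl⟩)
      rw [hns i0]
  rw [specRad, key]
  simp [Real.norm_eq_abs]

lemma tridiag_specRad {n : ℕ} (hn : 2 ≤ n) (b : ℝ) (hb : 0 ≤ b) :
    ∃ μ : ℝ, 0 < μ ∧ ∀ (α γ : ℝ), 0 < α → 0 < γ →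
      ∀ M : Matrix (Fin n) (Fin n) ℝ,
      (∀ i j : Fin n, M i j = if (i:ℕ) = (j:ℕ) then b
        else if (i:ℕ) = (j:ℕ)+1 then α else if (j:ℕ) = (i:ℕ)+1 then γ else 0) →
      specRad M = b + μ * Real.sqrt (α*γ) := by
  have hn0 : 0 < n := by omega
  haveI : Nonempty (Fin n) := ⟨⟨0, hn0⟩⟩
  -- the symmetric 0-1 tridiagonal matrix
  set TC : Matrix (Fin n) (Fin n) ℂ :=
    Matrix.of (fun i j : Fin n =>
      if (i:ℕ) = (j:ℕ)+1 ∨ (j:ℕ) = (i:ℕ)+1 then (1:ℂ) else 0) with hTCdef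
  have hTC : TC.IsHermitian := by
    ext i j
    simp only [conjTranspose_apply, hTCdef, Matrix.of_apply]
    rw [if_congr (Iff.intro Or.symm Or.symm) rfl rfl]
    split <;> simp
  set E := hTC.eigenvalues with hE
  set U := hTC.eigenvectorUnitary with hU
  have hspec : TC = (U : Matrix (Fin n) (Fin n) ℂ) *
      diagonal (fun i => (E i : ℂ)) * star (U : Matrix (Fin n) (Fin n) ℂ) :=
    hTC.spectral_theorem
  have hUU : (U : Matrix (Fin n) (Fin n) ℂ) * star (U : Matrix (Fin n) (Fin n) ℂ) = 1 :=
    Matrix.mem_unitaryGroup_iff.mp U.2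
  have hU'U : star (U : Matrix (Fin n) (Fin n) ℂ) * (U : Matrix (Fin n) (Fin n) ℂ) = 1 :=
    Matrix.mem_unitaryGroup_iff'.mp U.2
  have hrangeT : spectrum ℂ TC = Set.range (fun i => (E i : ℂ)) :=
    spectrum_of_conj TC _ _ hUU hU'U _ hspec
  -- symmetry of the spectrum
  have hsymm : spectrum ℂ (-TC) = spectrum ℂ TC := by
    set J : Matrix (Fin n) (Fin n) ℂ := diagonal (fun i : Fin n => ((-1:ℂ))^(i:ℕ)) with hJ
    have hJJ : J * J = 1 := by
      rw [hJ, diagonal_mul_diagonal]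
      convert diagonal_one with i
      rw [← pow_add]
      exact Even.neg_one_pow ⟨(i:ℕ), rfl⟩
    have hneg : J * TC * J = -TC := by
      ext i j
      rw [hJ, Matrix.mul_diagonal, Matrix.diagonal_mul]
      simp only [hTCdef, Matrix.of_apply, Matrix.neg_apply]
      by_cases h : (i:ℕ) = (j:ℕ)+1 ∨ (j:ℕ) = (i:ℕ)+1
      · simp only [h, if_pos]
        rcases h with h | h
        · rw [h, mul_one, ← pow_add]
          have : Odd ((j:ℕ)+1+(j:ℕ)) := ⟨(j:ℕ), by ring⟩
          simp [this.neg_one_pow]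
        · rw [h, mul_one, ← pow_add]
          have : Odd ((i:ℕ)+((i:ℕ)+1)) := ⟨(i:ℕ), by ring⟩
          simp [this.neg_one_pow]
      · simp [h]
    let u : (Matrix (Fin n) (Fin n) ℂ)ˣ := ⟨J, J, hJJ, hJJ⟩
    rw [← hneg, show J * TC * J = ↑u * TC * ↑u⁻¹ from rfl, spectrum.units_conjugate]
  obtain ⟨i0, hi0⟩ := Finite.exists_max (fun i : Fin n => |E i|)
  -- the max is attained with positive sign
  have hex : ∃ i1, E i1 = |E i0| := by
    rcases le_or_gt 0 (E i0) with h | h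
    · exact ⟨i0, (abs_of_nonneg h).symm⟩
    · have h1 : ((E i0 : ℂ)) ∈ spectrum ℂ TC := by rw [hrangeT]; exact ⟨i0, rfl⟩
      have h2 : (-(E i0) : ℂ) ∈ spectrum ℂ TC := by
        rw [← hsymm, ← spectrum.neg_eq]
        simpa using Set.neg_mem_neg.mpr h1
      rw [hrangeT] at h2
      obtain ⟨i1, hi1⟩ := h2
      refine ⟨i1, ?_⟩
      have h3 : ((E i1 : ℝ) : ℂ) = -((E i0 : ℝ) : ℂ) := hi1
      have : E i1 = -(E i0) := by exact_mod_cast h3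
      rw [this, abs_of_neg h]
  obtain ⟨i1, hi1⟩ := hex
  -- positivity of the spectral radius of TC
  have hμpos : 0 < |E i0| := by
    rcases lt_or_eq_of_le (abs_nonneg (E i0)) with h | h
    · exact h
    have hEz : ∀ i, E i = 0 := by
      intro i
      have := hi0 i
      rw [← h] at this
      exact abs_eq_zero.mp (le_antisymm this (abs_nonneg _))
    have hTC0 : TC = 0 := by
      rw [hspec]
      have : diagonal (fun i : Fin n => (E i : ℂ)) = 0 := by
        ext i j; simp [hEz, diagonal]
      rw [this, Matrix.mul_zero, Matrix.zero_mul]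
    have h01 : TC ⟨0, hn0⟩ ⟨1, by omega⟩ = 1 := by
      simp [hTCdef]
    rw [hTC0] at h01
    simp at h01
  refine ⟨|E i0|, hμpos, ?_⟩
  intro α γ hα hγ M hM
  set d : ℝ := Real.sqrt (α/γ) with hd
  set x : ℝ := Real.sqrt (α*γ) with hx
  have hdpos : 0 < d := Real.sqrt_pos.mpr (div_pos hα hγ)
  have hxpos : 0 < x := Real.sqrt_pos.mpr (mul_pos hα hγ)
  have hdx : d * x = α := by
    rw [hd, hx, ← Real.sqrt_mul (le_of_lt (div_pos hα hγ))]
    rw [show α/γ*(α*γ) = α^2 by field_simp]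
    exact Real.sqrt_sq hα.le
  have hxd : x = d * γ := by
    have h1 : d * γ = Real.sqrt ((α/γ) * γ^2) := by
      rw [Real.sqrt_mul (div_pos hα hγ).le, Real.sqrt_sq hγ.le]
    rw [h1, hx]
    congr 1
    field_simp
  have hdC : ((d:ℂ)) ≠ 0 := by exact_mod_cast hdpos.ne'
  set Dm : Matrix (Fin n) (Fin n) ℂ := diagonal (fun i : Fin n => ((d:ℂ))^(i:ℕ)) with hDm
  set Di : Matrix (Fin n) (Fin n) ℂ := diagonal (fun i : Fin n => (((d:ℂ))^(i:ℕ))⁻¹) with hDi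
  have hDmDi : Dm * Di = 1 := by
    rw [hDm, hDi, diagonal_mul_diagonal]
    convert diagonal_one with i
    exact mul_inv_cancel₀ (pow_ne_zero _ hdC)
  have hDiDm : Di * Dm = 1 := by
    rw [hDm, hDi, diagonal_mul_diagonal]
    convert diagonal_one with i
    exact inv_mul_cancel₀ (pow_ne_zero _ hdC)
  set v : Fin n → ℂ := fun i => ((b + x * E i : ℝ) : ℂ) with hv
  have step1 : (U : Matrix (Fin n) (Fin n) ℂ) * diagonal v * star (U : Matrix (Fin n) (Fin n) ℂ)
      = (b:ℂ) • 1 + (x:ℂ) • TC := by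
    have hvd : diagonal v = (b:ℂ) • (1 : Matrix (Fin n) (Fin n) ℂ)
        + (x:ℂ) • diagonal (fun i => (E i : ℂ)) := by
      rw [← diagonal_one, ← diagonal_smul, ← diagonal_smul, diagonal_add]
      funext i
      simp only [hv, Pi.add_apply, Pi.smul_apply, smul_eq_mul, Pi.one_apply, mul_one]
      push_cast
      ring
    rw [hvd, Matrix.mul_add, Matrix.add_mul, Matrix.mul_smul, Matrix.mul_smul,
      Matrix.smul_mul, Matrix.smul_mul, Matrix.mul_one, hUU, ← hspec]
  have hkey : (x:ℂ) = (d:ℂ) * (γ:ℂ) := by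
    rw [← Complex.ofReal_mul]; exact_mod_cast congrArg Complex.ofReal hxd
  have hkey2 : (d:ℂ) * (x:ℂ) = (α:ℂ) := by
    rw [← Complex.ofReal_mul]; exact_mod_cast congrArg Complex.ofReal hdx
  have step2 : M.map (fun x : ℝ => (x : ℂ)) = Dm * ((b:ℂ) • 1 + (x:ℂ) • TC) * Di := by
    ext i j
    rw [Matrix.map_apply, hM i j, hDm, hDi, Matrix.mul_diagonal, Matrix.diagonal_mul]
    simp only [Matrix.add_apply, Matrix.smul_apply, smul_eq_mul, hTCdef, Matrix.of_apply]
    by_cases h1 : (i:ℕ) = (j:ℕ)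
    · have hij : i = j := Fin.val_injective h1
      subst hij
      rw [if_pos rfl, Matrix.one_apply_eq, if_neg (by omega)]
      field_simp
      simp
    · have hij : i ≠ j := fun he => h1 (by rw [he])
      rw [if_neg h1, Matrix.one_apply_ne hij]
      by_cases h2 : (i:ℕ) = (j:ℕ)+1
      · rw [if_pos h2, if_pos (Or.inl h2), h2, pow_succ]
        rw [← hkey2]
        field_simp [pow_ne_zero _ hdC]
        ring
      · rw [if_neg h2]
        by_cases h3 : (j:ℕ) = (i:ℕ)+1
        · rw [if_pos h3, if_pos (Or.inr h3), h3, pow_succ]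
          rw [hkey]
          field_simp [pow_ne_zero _ hdC]
          ring
        · rw [if_neg h3, if_neg (by tauto)]
          simp
  have hdecomp : M.map (fun x : ℝ => (x : ℂ)) =
      (Dm * (U : Matrix (Fin n) (Fin n) ℂ)) * diagonal v
        * (star (U : Matrix (Fin n) (Fin n) ℂ) * Di) := by
    rw [step2, ← step1]
    simp only [Matrix.mul_assoc]
  have hPQ : (Dm * (U : Matrix (Fin n) (Fin n) ℂ))
      * (star (U : Matrix (Fin n) (Fin n) ℂ) * Di) = 1 := by
    rw [Matrix.mul_assoc, ← Matrix.mul_assoc (U : Matrix (Fin n) (Fin n) ℂ), hUU,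
      Matrix.one_mul, hDmDi]
  have hQP : (star (U : Matrix (Fin n) (Fin n) ℂ) * Di)
      * (Dm * (U : Matrix (Fin n) (Fin n) ℂ)) = 1 := by
    rw [Matrix.mul_assoc, ← Matrix.mul_assoc Di, hDiDm, Matrix.one_mul, hU'U]
  have hrange : spectrum ℂ (M.map (fun x : ℝ => (x : ℂ)))
      = Set.range (fun i => ((b + x * E i : ℝ) : ℂ)) :=
    spectrum_of_conj _ _ _ hPQ hQP v hdecomp
  have hnn : 0 ≤ b + x * |E i0| := by
    nlinarith [mul_nonneg hxpos.le (abs_nonneg (E i0))]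
  have habs : ∀ i, |b + x * E i| ≤ |b + x * E i1| := by
    intro i
    have h2 := abs_le.mp (hi0 i)
    rw [hi1, abs_of_nonneg hnn, abs_le]
    constructor <;> nlinarith [abs_nonneg (E i0)]
  have := specRad_eq_abs M (fun i => b + x * E i) hrange i1 habs
  rw [this]
  show |b + x * E i1| = _
  rw [hi1, abs_of_nonneg hnn, hx]
  ring

end LevAux

namespace LevAux

lemma sqrt_combo (u v p r : ℝ) (hu : 0 ≤ u) (hv : 0 ≤ v) (hp : 0 ≤ p) (hr : 0 ≤ r)
    (hpr : p + r = 1) :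
    p * Real.sqrt u + r * Real.sqrt v ≤ Real.sqrt (p * u + r * v) := by
  have h0 : 0 ≤ p * Real.sqrt u + r * Real.sqrt v :=
    add_nonneg (mul_nonneg hp (Real.sqrt_nonneg _)) (mul_nonneg hr (Real.sqrt_nonneg _))
  rw [← Real.sqrt_sq h0]
  apply Real.sqrt_le_sqrt
  set su := Real.sqrt u with hsu
  set sv := Real.sqrt v with hsv
  have hsu2 : su^2 = u := Real.sq_sqrt hu
  have hsv2 : sv^2 = v := Real.sq_sqrt hv
  rw [← hsu2, ← hsv2]
  have hr' : r = 1 - p := by linarith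
  subst hr'
  nlinarith [mul_nonneg (mul_nonneg hp (by linarith : (0:ℝ) ≤ 1 - p)) (sq_nonneg (su - sv))]

end LevAux


/-- Levinger's function of a nonnegative tridiagonal Toeplitz matrix is concave
on `(0,1)`, increasing on `(0,1/2)` and decreasing on `(1/2,1)`, all strictly
when `a ≠ c`. -/
theorem levinger_tridiagonal_toeplitz {n : ℕ} (hn : 2 ≤ n) (a b c : ℝ)
    (ha : 0 ≤ a) (hb : 0 ≤ b) (hc : 0 ≤ c) (hmax : 0 < max a c)
    (A : Matrix (Fin n) (Fin n) ℝ)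
    (hA : ∀ i j : Fin n, A i j =
      if (i:ℕ) = (j:ℕ) then b
      else if (i:ℕ) = (j:ℕ) + 1 then a
      else if (j:ℕ) = (i:ℕ) + 1 then c
      else 0) :
    (ConcaveOn ℝ (Set.Ioo (0:ℝ) 1)
        (fun t : ℝ => specRad ((1 - t) • A + t • Aᵀ)) ∧
      MonotoneOn (fun t : ℝ => specRad ((1 - t) • A + t • Aᵀ))
        (Set.Ioo (0:ℝ) (1/2)) ∧
      AntitoneOn (fun t : ℝ => specRad ((1 - t) • A + t • Aᵀ))
        (Set.Ioo (1/2:ℝ) 1)) ∧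
    (a ≠ c →
      StrictConcaveOn ℝ (Set.Ioo (0:ℝ) 1)
        (fun t : ℝ => specRad ((1 - t) • A + t • Aᵀ)) ∧
      StrictMonoOn (fun t : ℝ => specRad ((1 - t) • A + t • Aᵀ))
        (Set.Ioo (0:ℝ) (1/2)) ∧
      StrictAntiOn (fun t : ℝ => specRad ((1 - t) • A + t • Aᵀ))
        (Set.Ioo (1/2:ℝ) 1)) := by
  obtain ⟨μ, hμpos, hformula⟩ := LevAux.tridiag_specRad hn b hb
  have hform : ∀ t ∈ Set.Ioo (0:ℝ) 1,
      specRad ((1 - t) • A + t • Aᵀ) = b + μ * Real.sqrt (a*c + t*(1-t)*(a-c)^2) := by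
    intro t ht
    obtain ⟨ht0, ht1⟩ := ht
    have h1t : 0 < 1 - t := by linarith
    have hα : 0 < (1-t)*a + t*c := by
      rcases lt_max_iff.mp hmax with h | h
      · nlinarith [mul_nonneg ht0.le hc]
      · nlinarith [mul_nonneg h1t.le ha]
    have hγ : 0 < (1-t)*c + t*a := by
      rcases lt_max_iff.mp hmax with h | h
      · nlinarith [mul_nonneg h1t.le hc]
      · nlinarith [mul_nonneg ht0.le ha]
    have hMM : ∀ i j : Fin n, ((1 - t) • A + t • Aᵀ) i j =
        if (i:ℕ) = (j:ℕ) then b else if (i:ℕ) = (j:ℕ)+1 then (1-t)*a + t*c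
        else if (j:ℕ) = (i:ℕ)+1 then (1-t)*c + t*a else 0 := by
      intro i j
      simp only [Matrix.add_apply, Matrix.smul_apply, Matrix.transpose_apply, smul_eq_mul,
        hA i j, hA j i]
      by_cases h1 : (i:ℕ) = (j:ℕ)
      · simp only [if_pos h1, if_pos h1.symm]; ring
      · have h1' : ¬(j:ℕ) = (i:ℕ) := fun h => h1 h.symm
        by_cases h2 : (i:ℕ) = (j:ℕ)+1
        · have h3 : ¬(j:ℕ) = (i:ℕ)+1 := by omega
          simp only [if_neg h1, if_pos h2, if_neg h1', if_neg h3]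
        · by_cases h3 : (j:ℕ) = (i:ℕ)+1
          · simp only [if_neg h1, if_neg h2, if_pos h3, if_neg h1']
          · simp only [if_neg h1, if_neg h2, if_neg h3, if_neg h1']; ring
    rw [hformula _ _ hα hγ _ hMM,
      show ((1-t)*a + t*c)*((1-t)*c + t*a) = a*c + t*(1-t)*(a-c)^2 from by ring]
  have hsub1 : Set.Ioo (0:ℝ) (1/2) ⊆ Set.Ioo (0:ℝ) 1 :=
    Set.Ioo_subset_Ioo le_rfl (by norm_num)
  have hsub2 : Set.Ioo (1/2:ℝ) 1 ⊆ Set.Ioo (0:ℝ) 1 :=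
    Set.Ioo_subset_Ioo (by norm_num) le_rfl
  rcases eq_or_ne a c with hac | hac
  · -- constant case
    have hconst : ∀ t ∈ Set.Ioo (0:ℝ) 1,
        specRad ((1 - t) • A + t • Aᵀ) = b + μ * Real.sqrt (a*c) := by
      intro t ht
      rw [hform t ht, hac]
      norm_num
    refine ⟨⟨?_, ?_, ?_⟩, fun h => absurd hac h⟩
    · refine ⟨convex_Ioo 0 1, fun x hx y hy p q hp hq hpq => ?_⟩
      have hz := (convex_Ioo (0:ℝ) 1) hx hy hp hq hpq
      have hz' : p*x + q*y ∈ Set.Ioo (0:ℝ) 1 := by simpa using hz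
      simp only [smul_eq_mul]
      rw [hconst x hx, hconst y hy, hconst _ hz']
      exact le_of_eq (by linear_combination (b + μ * Real.sqrt (a*c)) * hpq)
    · intro x hx y hy _
      show specRad ((1 - x) • A + x • Aᵀ) ≤ specRad ((1 - y) • A + y • Aᵀ)
      rw [hconst x (hsub1 hx), hconst y (hsub1 hy)]
    · intro x hx y hy _
      show specRad ((1 - y) • A + y • Aᵀ) ≤ specRad ((1 - x) • A + x • Aᵀ)
      rw [hconst x (hsub2 hx), hconst y (hsub2 hy)]
  · -- strict case
    have hk : 0 < (a-c)^2 := by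
      have : a - c ≠ 0 := sub_ne_zero.mpr hac
      positivity
    have hQnn : ∀ t : ℝ, t ∈ Set.Ioo (0:ℝ) 1 → 0 ≤ a*c + t*(1-t)*(a-c)^2 := by
      intro t ht
      have h1 := ht.1; have h2 := ht.2
      have h3 : 0 ≤ t*(1-t) := by nlinarith
      nlinarith [mul_nonneg ha hc, mul_nonneg h3 (sq_nonneg (a-c))]
    have hsmono : StrictMonoOn (fun t : ℝ => specRad ((1 - t) • A + t • Aᵀ))
        (Set.Ioo (0:ℝ) (1/2)) := by
      intro s hs t ht hst
      have hs' := hsub1 hs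
      have ht' := hsub1 ht
      show specRad ((1 - s) • A + s • Aᵀ) < specRad ((1 - t) • A + t • Aᵀ)
      rw [hform s hs', hform t ht']
      have hsum : 0 < 1 - (s + t) := by
        have := hs.2; have := ht.2; linarith
      have hQlt : a*c + s*(1-s)*(a-c)^2 < a*c + t*(1-t)*(a-c)^2 := by
        nlinarith [mul_pos (mul_pos hk (sub_pos.mpr hst)) hsum]
      exact add_lt_add_right
        (mul_lt_mul_of_pos_left (Real.sqrt_lt_sqrt (hQnn s hs') hQlt) hμpos) b
    have hsanti : StrictAntiOn (fun t : ℝ => specRad ((1 - t) • A + t • Aᵀ))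
        (Set.Ioo (1/2:ℝ) 1) := by
      intro s hs t ht hst
      have hs' := hsub2 hs
      have ht' := hsub2 ht
      show specRad ((1 - t) • A + t • Aᵀ) < specRad ((1 - s) • A + s • Aᵀ)
      rw [hform s hs', hform t ht']
      have hsum : 0 < (s + t) - 1 := by
        have := hs.1; have := ht.1; linarith
      have hQlt : a*c + t*(1-t)*(a-c)^2 < a*c + s*(1-s)*(a-c)^2 := by
        nlinarith [mul_pos (mul_pos hk (sub_pos.mpr hst)) hsum]
      exact add_lt_add_right
        (mul_lt_mul_of_pos_left (Real.sqrt_lt_sqrt (hQnn t ht') hQlt) hμpos) b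
    have hsconc : StrictConcaveOn ℝ (Set.Ioo (0:ℝ) 1)
        (fun t : ℝ => specRad ((1 - t) • A + t • Aᵀ)) := by
      refine ⟨convex_Ioo 0 1, fun x hx y hy hxy p q hp hq hpq => ?_⟩
      have hz := (convex_Ioo (0:ℝ) 1) hx hy hp.le hq.le hpq
      have hz' : p*x + q*y ∈ Set.Ioo (0:ℝ) 1 := by simpa using hz
      simp only [smul_eq_mul]
      rw [hform x hx, hform y hy, hform _ hz']
      have hQid : a*c + (p*x+q*y)*(1-(p*x+q*y))*(a-c)^2
          = p * (a*c + x*(1-x)*(a-c)^2) + q * (a*c + y*(1-y)*(a-c)^2)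
            + (a-c)^2 * (p*q*(x-y)^2) := by
        have hq' : q = 1 - p := by linarith
        subst hq'
        ring
      have hpos : 0 < (a-c)^2 * (p*q*(x-y)^2) := by
        have hxy' : x - y ≠ 0 := sub_ne_zero.mpr hxy
        have h5 : 0 < (x-y)^2 := by positivity
        have : a - c ≠ 0 := sub_ne_zero.mpr hac
        positivity
      have h1 : p * (a*c + x*(1-x)*(a-c)^2) + q * (a*c + y*(1-y)*(a-c)^2)
          < a*c + (p*x+q*y)*(1-(p*x+q*y))*(a-c)^2 := by
        rw [hQid]; linarith
      have hcomb : 0 ≤ p * (a*c + x*(1-x)*(a-c)^2) + q * (a*c + y*(1-y)*(a-c)^2) :=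
        add_nonneg (mul_nonneg hp.le (hQnn x hx)) (mul_nonneg hq.le (hQnn y hy))
      have h2 := Real.sqrt_lt_sqrt hcomb h1
      have h3 := LevAux.sqrt_combo _ _ p q (hQnn x hx) (hQnn y hy) hp.le hq.le hpq
      have h4 : p * Real.sqrt (a*c + x*(1-x)*(a-c)^2)
            + q * Real.sqrt (a*c + y*(1-y)*(a-c)^2)
          < Real.sqrt (a*c + (p*x+q*y)*(1-(p*x+q*y))*(a-c)^2) := lt_of_le_of_lt h3 h2
      have h5 := mul_lt_mul_of_pos_left h4 hμpos
      have hq' : q = 1 - p := by linarith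
      subst hq'
      nlinarith [h5]
    exact ⟨⟨hsconc.concaveOn, hsmono.monotoneOn, hsanti.antitoneOn⟩,
      fun _ => ⟨hsconc, hsmono, hsanti⟩⟩
end

section
/- Let n ≥ 3, u, v, w > 0, and let A ∈ ℝ^{n×n} be the Toeplitz matrix with A_{ii} = w, A_{i,i+1} = u for i = 1,…,n−1, A_{1,n} = u, A_{i+1,i} = v for i = 1,…,n−1, A_{n,1} = v, and all other entries 0. Then Levinger's function r(t) := ρ((1−t)A + tAᵀ) is concave in t on (0,1), strictly concave if u ≠ v. -/
open Matrix

open scoped ENNReal NNReal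

section Aux

attribute [local instance] Matrix.linftyOpNormedRing Matrix.linftyOpNormedAlgebra

lemma specRad_of_rowSums {m : Type*} [Fintype m] [DecidableEq m] [Nonempty m]
    {N : Matrix m m ℝ} (hN : ∀ i j, 0 ≤ N i j) {s : ℝ}
    (hs : ∀ i, ∑ j, N i j = s) : specRad N = s := by
  have hs0 : 0 ≤ s := by
    obtain ⟨i⟩ := ‹Nonempty m›
    rw [← hs i]; exact Finset.sum_nonneg fun j _ => hN i j
  set Nc : Matrix m m ℂ := N.map (fun x : ℝ => (x : ℂ)) with hNc
  have hrow : ∀ i, ∑ j, Nc i j = (s : ℂ) := by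
    intro i
    rw [← hs i]
    push_cast [hNc, Matrix.map_apply]
    rfl
  have hker : (algebraMap ℂ (Matrix m m ℂ) (s:ℂ) - Nc) *ᵥ (fun _ => 1) = 0 := by
    funext i
    simp only [Matrix.mulVec, dotProduct, Matrix.sub_apply, mul_one,
      Matrix.algebraMap_matrix_apply, Finset.sum_sub_distrib, hrow i,
      Finset.sum_ite_eq, Finset.mem_univ, if_true, Pi.zero_apply, sub_self,
      Algebra.algebraMap_self, RingHom.id_apply]
  have hmem : (s : ℂ) ∈ spectrum ℂ Nc := by
    rw [spectrum.mem_iff]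
    intro hunit
    rw [Matrix.isUnit_iff_isUnit_det] at hunit
    have hvne : (fun _ : m => (1:ℂ)) ≠ 0 := by
      intro h; simpa using congrFun h (Classical.arbitrary m)
    have hdet : (algebraMap ℂ (Matrix m m ℂ) (s:ℂ) - Nc).det = 0 :=
      (Matrix.exists_mulVec_eq_zero_iff).1 ⟨fun _ => 1, hvne, hker⟩
    rw [hdet] at hunit
    exact hunit.ne_zero rfl
  have hnorm : ‖Nc‖₊ = s.toNNReal := by
    rw [Matrix.linfty_opNNNorm_def]
    have hr : ∀ i : m, ∑ j, ‖Nc i j‖₊ = s.toNNReal := by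
      intro i
      apply NNReal.coe_injective
      push_cast
      rw [Real.coe_toNNReal _ hs0, ← hs i]
      exact Finset.sum_congr rfl fun j _ => by
        simp [hNc, Matrix.map_apply, Real.norm_eq_abs, abs_of_nonneg (hN i j)]
    simp only [hr]
    exact Finset.sup_const Finset.univ_nonempty _
  have hle : spectralRadius ℂ Nc ≤ (s.toNNReal : ℝ≥0∞) := by
    simpa [hnorm] using spectrum.spectralRadius_le_nnnorm (𝕜 := ℂ) (a := Nc)
  have hge : (s.toNNReal : ℝ≥0∞) ≤ spectralRadius ℂ Nc := by
    have : (‖(s:ℂ)‖₊ : ℝ≥0∞) ≤ spectralRadius ℂ Nc :=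
      le_iSup₂ (f := fun k (_ : k ∈ spectrum ℂ Nc) => (‖k‖₊ : ℝ≥0∞)) (s:ℂ) hmem
    simpa [Complex.nnnorm_real, Real.nnnorm_of_nonneg hs0,
      Real.toNNReal_of_nonneg hs0] using this
  rw [specRad, ← hNc, le_antisymm hle hge]
  simp [Real.coe_toNNReal _ hs0]

end Aux

lemma specRad_conj {m : Type*} [Fintype m] [DecidableEq m]
    (M : Matrix m m ℝ) (d : m → ℝ) (hd : ∀ i, d i ≠ 0) :
    specRad (diagonal d * M * diagonal (fun i => (d i)⁻¹)) = specRad M := by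
  set f : ℝ →+* ℂ := algebraMap ℝ ℂ with hf
  have hfc : ∀ x : ℝ, f x = (x : ℂ) := fun x => rfl
  set Mc : Matrix m m ℂ := M.map (fun x : ℝ => (x : ℂ)) with hMc
  set Dc : Matrix m m ℂ := diagonal (fun i => (d i : ℂ)) with hDc
  set Ec : Matrix m m ℂ := diagonal (fun i => ((d i : ℂ))⁻¹) with hEc
  have hde : Dc * Ec = 1 := by
    rw [hDc, hEc, diagonal_mul_diagonal]
    convert diagonal_one with i
    exact mul_inv_cancel₀ (by exact_mod_cast hd i)
  have hed : Ec * Dc = 1 := by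
    rw [hDc, hEc, diagonal_mul_diagonal]
    convert diagonal_one with i
    exact inv_mul_cancel₀ (by exact_mod_cast hd i)
  set u : (Matrix m m ℂ)ˣ := ⟨Dc, Ec, hde, hed⟩ with hu
  have hmap : (diagonal d * M * diagonal (fun i => (d i)⁻¹)).map (fun x : ℝ => (x : ℂ))
      = Dc * Mc * Ec := by
    have h1 : ∀ (P Q : Matrix m m ℝ), (P * Q).map (fun x : ℝ => (x : ℂ))
        = P.map (fun x : ℝ => (x : ℂ)) * Q.map (fun x : ℝ => (x : ℂ)) := by
      intro P Q
      exact Matrix.map_mul (f := f)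
    have hD : (diagonal d).map (fun x : ℝ => (x : ℂ)) = Dc := by
      rw [Matrix.diagonal_map (by simp [hfc])]
    have hE : (diagonal (fun i => (d i)⁻¹)).map (fun x : ℝ => (x : ℂ)) = Ec := by
      rw [Matrix.diagonal_map (by simp [hfc]), hEc]
      simp [Function.comp]
    rw [h1, h1, hD, hE, hMc]
  have hspec : spectrum ℂ (Dc * Mc * Ec) = spectrum ℂ Mc := by
    have := spectrum.units_conjugate (R := ℂ) (a := Mc) (u := u)
    simpa [hu] using this
  rw [specRad, specRad, hmap, spectralRadius, spectralRadius, hspec]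

def fPM (n : ℕ) (w x y : ℝ) : Matrix (Fin n) (Fin n) ℝ :=
  Matrix.of fun i j : Fin n =>
    if (i:ℕ) = (j:ℕ) then w
    else if (j:ℕ) = (i:ℕ) + 1 then x
    else if (i:ℕ) = 0 ∧ (j:ℕ) = n - 1 then x
    else if (i:ℕ) = (j:ℕ) + 1 then y
    else if (i:ℕ) = n - 1 ∧ (j:ℕ) = 0 then y
    else 0

lemma fPM_matB {n : ℕ} (hn : 3 ≤ n) (u v w : ℝ) (A : Matrix (Fin n) (Fin n) ℝ)
    (hA : ∀ i j : Fin n, A i j =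
      if (i:ℕ) = (j:ℕ) then w
      else if (j:ℕ) = (i:ℕ) + 1 then u
      else if (i:ℕ) = 0 ∧ (j:ℕ) = n - 1 then u
      else if (i:ℕ) = (j:ℕ) + 1 then v
      else if (i:ℕ) = n - 1 ∧ (j:ℕ) = 0 then v
      else 0) (t : ℝ) :
    (1 - t) • A + t • Aᵀ = fPM n w ((1-t)*u + t*v) ((1-t)*v + t*u) := by
  ext i j
  have hi := i.isLt
  have hj := j.isLt
  simp only [Matrix.add_apply, Matrix.smul_apply, Matrix.transpose_apply, hA i j, hA j i,
    fPM, Matrix.of_apply, smul_eq_mul]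
  split_ifs
  all_goals try ring
  all_goals (exfalso; omega)
lemma specRad_fPM {k : ℕ} (w X Y : ℝ) (hw : 0 ≤ w) (hX : 0 < X) (hY : 0 < Y) :
    specRad (fPM (k+3) w (X^(k+3)) (Y^(k+3))) = w + X^(k+2)*Y + X*Y^(k+2) := by
  haveI : Nonempty (Fin (k+3)) := ⟨⟨0, by omega⟩⟩
  set x := X^(k+3) with hx
  set y := Y^(k+3) with hy
  have hxp : 0 < x := by positivity
  have hyp : 0 < y := by positivity
  set r : ℝ := X / Y with hr
  have hrp : 0 < r := by positivity
  set d : Fin (k+3) → ℝ := fun i => r ^ (i:ℕ) with hdd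
  have hd : ∀ i, d i ≠ 0 := fun i => by positivity
  set c := X^(k+2)*Y with hc
  set e := X*Y^(k+2) with he
  have hcp : 0 < c := by positivity
  have hep : 0 < e := by positivity
  set C := diagonal d * fPM (k+3) w x y * diagonal (fun i => (d i)⁻¹) with hC
  have hCapp : ∀ i j, C i j = d i * fPM (k+3) w x y i j * (d j)⁻¹ := by
    intro i j
    rw [hC, Matrix.mul_diagonal, Matrix.diagonal_mul]
  have hX0 : X ≠ 0 := hX.ne'
  have hY0 : Y ≠ 0 := hY.ne'
  have hr0 : r ≠ 0 := hrp.ne'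
  have hEnt : ∀ i j : Fin (k+3), C i j =
      (if (j:ℕ) = (i:ℕ) then w else 0) +
      (if (j:ℕ) = ((i:ℕ)+1) % (k+3) then c else 0) +
      (if (j:ℕ) = ((i:ℕ)+(k+2)) % (k+3) then e else 0) := by
    rintro ⟨i, hi⟩ ⟨j, hj⟩
    rw [hCapp]
    simp only [fPM, Matrix.of_apply, hdd, Fin.val_mk]
    have hm2 : ((i+1) % (k+3) = 0 ∧ i + 1 = k + 3) ∨ ((i+1) % (k+3) = i+1 ∧ i + 1 < k + 3) := by
      rcases Nat.lt_or_ge (i+1) (k+3) with h | h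
      · exact Or.inr ⟨Nat.mod_eq_of_lt h, h⟩
      · have h' : i + 1 = k + 3 := by omega
        exact Or.inl ⟨by rw [h', Nat.mod_self], h'⟩
    have hm3 : ((i+(k+2)) % (k+3) = k+2 ∧ i = 0) ∨ ((i+(k+2)) % (k+3) = i-1 ∧ 0 < i) := by
      rcases Nat.eq_zero_or_pos i with h | h
      · subst h
        refine Or.inl ⟨?_, rfl⟩
        rw [Nat.zero_add]
        exact Nat.mod_eq_of_lt (by omega)
      · refine Or.inr ⟨?_, h⟩
        have hik : i + (k+2) = (i-1) + (k+3) := by omega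
        rw [hik, Nat.add_mod_right, Nat.mod_eq_of_lt (by omega)]
    set m2 := (i+1) % (k+3) with hm2d
    set m3 := (i+(k+2)) % (k+3) with hm3d
    by_cases h1 : i = j
    · subst h1
      rw [if_pos rfl, if_pos rfl, if_neg (by omega), if_neg (by omega)]
      field_simp
      ring
    by_cases h2 : j = i + 1
    · subst h2
      rw [if_neg (by omega), if_pos rfl, if_neg (by omega), if_pos (by omega),
        if_neg (by omega)]
      rw [hx, hc, hr]
      simp only [div_pow]
      field_simp
      ring
    by_cases h3 : i = 0 ∧ j = k + 3 - 1
    · obtain ⟨rfl, rfl⟩ := h3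
      rw [if_neg (by omega), if_neg (by omega), if_pos (by omega), if_neg (by omega),
        if_neg (by omega), if_pos (by omega)]
      rw [show k + 3 - 1 = k + 2 by omega, hx, he, hr]
      simp only [div_pow]
      field_simp
      ring
    by_cases h4 : i = j + 1
    · subst h4
      rw [if_neg (by omega), if_neg (by omega), if_neg (by omega), if_pos rfl,
        if_neg (by omega), if_neg (by omega), if_pos (by omega)]
      rw [hy, he, hr]
      simp only [div_pow]
      field_simp
      ring
    by_cases h5 : i = k + 3 - 1 ∧ j = 0
    · obtain ⟨rfl, rfl⟩ := h5
      rw [if_neg (by omega), if_neg (by omega), if_neg (by omega), if_neg (by omega),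
        if_pos (by omega), if_neg (by omega), if_pos (by omega), if_neg (by omega)]
      rw [show k + 3 - 1 = k + 2 by omega, hy, hc, hr]
      simp only [div_pow]
      field_simp
      ring
    · rw [if_neg (by omega), if_neg (by omega), if_neg (by omega), if_neg (by omega),
        if_neg (by omega), if_neg (by omega), if_neg (by omega), if_neg (by omega)]
      ring
  have hsum1 : ∀ (a : ℕ), a < k + 3 → ∀ f : ℝ,
      (∑ j : Fin (k+3), if (j:ℕ) = a then f else 0) = f := by
    intro a ha f
    have hcongr : ∀ j : Fin (k+3), (if (j:ℕ) = a then f else 0) =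
        if j = (⟨a, ha⟩ : Fin (k+3)) then f else 0 := by
      intro j
      by_cases hja : (j:ℕ) = a
      · rw [if_pos hja, if_pos (Fin.ext hja)]
      · rw [if_neg hja, if_neg (fun h => hja (by rw [h]))]
    rw [Finset.sum_congr rfl fun j _ => hcongr j, Finset.sum_ite_eq']
    simp
  have hrow : ∀ i : Fin (k+3), ∑ j, C i j = w + c + e := by
    intro i
    rw [Finset.sum_congr rfl fun j _ => hEnt i j]
    rw [Finset.sum_add_distrib, Finset.sum_add_distrib]
    rw [hsum1 (i:ℕ) i.isLt w, hsum1 _ (Nat.mod_lt _ (by omega)) c,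
      hsum1 _ (Nat.mod_lt _ (by omega)) e]
  have hnn : ∀ i j, 0 ≤ C i j := by
    intro i j
    rw [hEnt i j]
    split_ifs <;> linarith [hcp.le, hep.le]
  have h1 := specRad_conj (fPM (k+3) w x y) d hd
  rw [← hC] at h1
  rw [← h1, specRad_of_rowSums hnn hrow, hc, he]

lemma gm_lt {θ x y : ℝ} (hθ0 : 0 < θ) (hθ1 : θ < 1) (hx : 0 < x) (hy : 0 < y)
    (hxy : x ≠ y) : x ^ θ * y ^ (1 - θ) < θ * x + (1 - θ) * y := by
  have hlog : θ * Real.log x + (1 - θ) * Real.log y < Real.log (θ * x + (1 - θ) * y) := by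
    have := strictConcaveOn_log_Ioi.2 (Set.mem_Ioi.2 hx) (Set.mem_Ioi.2 hy) hxy hθ0
      (show (0:ℝ) < 1 - θ by linarith) (by ring)
    simpa [smul_eq_mul] using this
  have hpos : 0 < θ * x + (1 - θ) * y := by nlinarith
  calc x ^ θ * y ^ (1 - θ)
      = Real.exp (θ * Real.log x + (1 - θ) * Real.log y) := by
        rw [Real.exp_add, Real.rpow_def_of_pos hx, Real.rpow_def_of_pos hy]
        ring_nf
    _ < Real.exp (Real.log (θ * x + (1 - θ) * y)) := Real.exp_lt_exp.2 hlog
    _ = θ * x + (1 - θ) * y := Real.exp_log hpos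

lemma gm_combo {θ lam mu A1 B1 A2 B2 : ℝ} (hθ0 : 0 ≤ θ) (hθ1 : θ ≤ 1)
    (hlam : 0 < lam) (hmu : 0 < mu) (hs : lam + mu = 1)
    (hA1 : 0 < A1) (hB1 : 0 < B1) (hA2 : 0 < A2) (hB2 : 0 < B2) :
    lam * (A1 ^ θ * B1 ^ (1 - θ)) + mu * (A2 ^ θ * B2 ^ (1 - θ))
      ≤ (lam * A1 + mu * A2) ^ θ * (lam * B1 + mu * B2) ^ (1 - θ) := by
  set A0 := lam * A1 + mu * A2 with hA0
  set B0 := lam * B1 + mu * B2 with hB0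
  have hA0p : 0 < A0 := by positivity
  have hB0p : 0 < B0 := by positivity
  set G := A0 ^ θ * B0 ^ (1 - θ) with hG
  have hGp : 0 < G := by positivity
  have key : ∀ a b : ℝ, 0 < a → 0 < b →
      a ^ θ * b ^ (1 - θ) ≤ G * (θ * (a / A0) + (1 - θ) * (b / B0)) := by
    intro a b ha hb
    have h1 : a ^ θ * b ^ (1 - θ) = G * ((a / A0) ^ θ * (b / B0) ^ (1 - θ)) := by
      rw [hG, Real.div_rpow ha.le hA0p.le, Real.div_rpow hb.le hB0p.le]
      field_simp
    rw [h1]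
    have := Real.geom_mean_le_arith_mean2_weighted (w₁ := θ) (w₂ := 1 - θ)
      hθ0 (by linarith) (div_nonneg ha.le hA0p.le) (div_nonneg hb.le hB0p.le) (by ring)
    exact mul_le_mul_of_nonneg_left this hGp.le
  have k1 := key A1 B1 hA1 hB1
  have k2 := key A2 B2 hA2 hB2
  have : lam * (A1 ^ θ * B1 ^ (1 - θ)) + mu * (A2 ^ θ * B2 ^ (1 - θ))
      ≤ G * (θ * ((lam * A1 + mu * A2) / A0) + (1 - θ) * ((lam * B1 + mu * B2) / B0)) := by
    calc lam * (A1 ^ θ * B1 ^ (1 - θ)) + mu * (A2 ^ θ * B2 ^ (1 - θ))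
        ≤ lam * (G * (θ * (A1 / A0) + (1 - θ) * (B1 / B0)))
          + mu * (G * (θ * (A2 / A0) + (1 - θ) * (B2 / B0))) := by
          exact add_le_add (mul_le_mul_of_nonneg_left k1 hlam.le)
            (mul_le_mul_of_nonneg_left k2 hmu.le)
      _ = G * (θ * ((lam * A1 + mu * A2) / A0) + (1 - θ) * ((lam * B1 + mu * B2) / B0)) := by
          field_simp
          ring
  calc lam * (A1 ^ θ * B1 ^ (1 - θ)) + mu * (A2 ^ θ * B2 ^ (1 - θ))
      ≤ G * (θ * ((lam * A1 + mu * A2) / A0) + (1 - θ) * ((lam * B1 + mu * B2) / B0)) := this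
    _ = G := by
        rw [← hA0, ← hB0, div_self hA0p.ne', div_self hB0p.ne']
        ring

lemma gm_combo_strict {θ lam mu A1 B1 A2 B2 : ℝ} (hθ0 : 0 < θ) (hθ1 : θ < 1)
    (hlam : 0 < lam) (hmu : 0 < mu) (hs : lam + mu = 1)
    (hA1 : 0 < A1) (hB1 : 0 < B1) (hA2 : 0 < A2) (hB2 : 0 < B2)
    (hne : A1 * B2 ≠ A2 * B1) :
    lam * (A1 ^ θ * B1 ^ (1 - θ)) + mu * (A2 ^ θ * B2 ^ (1 - θ))
      < (lam * A1 + mu * A2) ^ θ * (lam * B1 + mu * B2) ^ (1 - θ) := by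
  set A0 := lam * A1 + mu * A2 with hA0
  set B0 := lam * B1 + mu * B2 with hB0
  have hA0p : 0 < A0 := by positivity
  have hB0p : 0 < B0 := by positivity
  set G := A0 ^ θ * B0 ^ (1 - θ) with hG
  have hGp : 0 < G := by positivity
  have hr1 : A1 / A0 ≠ B1 / B0 := by
    intro h
    rw [div_eq_div_iff hA0p.ne' hB0p.ne'] at h
    apply hne
    have : mu * (A1 * B2) = mu * (A2 * B1) := by
      rw [hA0, hB0] at h; nlinarith [h]
    exact mul_left_cancel₀ hmu.ne' this
  have k1 : A1 ^ θ * B1 ^ (1 - θ) < G * (θ * (A1 / A0) + (1 - θ) * (B1 / B0)) := by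
    have h1 : A1 ^ θ * B1 ^ (1 - θ) = G * ((A1 / A0) ^ θ * (B1 / B0) ^ (1 - θ)) := by
      rw [hG, Real.div_rpow hA1.le hA0p.le, Real.div_rpow hB1.le hB0p.le]
      field_simp
    rw [h1]
    exact mul_lt_mul_of_pos_left
      (gm_lt hθ0 hθ1 (div_pos hA1 hA0p) (div_pos hB1 hB0p) hr1) hGp
  have k2 : A2 ^ θ * B2 ^ (1 - θ) ≤ G * (θ * (A2 / A0) + (1 - θ) * (B2 / B0)) := by
    have h1 : A2 ^ θ * B2 ^ (1 - θ) = G * ((A2 / A0) ^ θ * (B2 / B0) ^ (1 - θ)) := by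
      rw [hG, Real.div_rpow hA2.le hA0p.le, Real.div_rpow hB2.le hB0p.le]
      field_simp
    rw [h1]
    have := Real.geom_mean_le_arith_mean2_weighted (w₁ := θ) (w₂ := 1 - θ)
      hθ0.le (by linarith) (div_nonneg hA2.le hA0p.le) (div_nonneg hB2.le hB0p.le) (by ring)
    exact mul_le_mul_of_nonneg_left this hGp.le
  have hsum : lam * (A1 ^ θ * B1 ^ (1 - θ)) + mu * (A2 ^ θ * B2 ^ (1 - θ))
      < G * (θ * (A0 / A0) + (1 - θ) * (B0 / B0)) := by
    have e : G * (θ * (A0 / A0) + (1 - θ) * (B0 / B0))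
        = lam * (G * (θ * (A1 / A0) + (1 - θ) * (B1 / B0)))
          + mu * (G * (θ * (A2 / A0) + (1 - θ) * (B2 / B0))) := by
      rw [hA0, hB0]
      field_simp
      ring
    rw [e]
    exact add_lt_add_of_lt_of_le (mul_lt_mul_of_pos_left k1 hlam)
      (mul_le_mul_of_nonneg_left k2 hmu.le)
  calc lam * (A1 ^ θ * B1 ^ (1 - θ)) + mu * (A2 ^ θ * B2 ^ (1 - θ))
      < G * (θ * (A0 / A0) + (1 - θ) * (B0 / B0)) := hsum
    _ = G := by rw [div_self hA0p.ne', div_self hB0p.ne']; ring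

lemma concave_piece (θ p q : ℝ) (hp : 0 < p) (hq : 0 < q) (hθ0 : 0 ≤ θ) (hθ1 : θ ≤ 1) :
    ConcaveOn ℝ (Set.Ioo (0:ℝ) 1)
      (fun t => ((1-t)*p + t*q) ^ θ * ((1-t)*q + t*p) ^ (1-θ)) := by
  refine ⟨convex_Ioo 0 1, fun x hx y hy lam mu hlam hmu hsum => ?_⟩
  obtain ⟨hx0, hx1⟩ := hx
  obtain ⟨hy0, hy1⟩ := hy
  rcases eq_or_lt_of_le hlam with h | hlam'
  · have hmu1 : mu = 1 := by linarith
    simp [← h, hmu1]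
  rcases eq_or_lt_of_le hmu with h | hmu'
  · have hlam1 : lam = 1 := by linarith
    simp [← h, hlam1]
  have hA1 : 0 < (1-x)*p + x*q := by nlinarith
  have hB1 : 0 < (1-x)*q + x*p := by nlinarith
  have hA2 : 0 < (1-y)*p + y*q := by nlinarith
  have hB2 : 0 < (1-y)*q + y*p := by nlinarith
  have key := gm_combo hθ0 hθ1 hlam' hmu' hsum hA1 hB1 hA2 hB2
  have e1 : (1-(lam*x+mu*y))*p + (lam*x+mu*y)*q
      = lam*((1-x)*p + x*q) + mu*((1-y)*p + y*q) := by linear_combination (-p) * hsum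
  have e2 : (1-(lam*x+mu*y))*q + (lam*x+mu*y)*p
      = lam*((1-x)*q + x*p) + mu*((1-y)*q + y*p) := by linear_combination (-q) * hsum
  simp only [smul_eq_mul]
  rw [e1, e2]
  exact key

lemma strict_concave_piece (θ p q : ℝ) (hp : 0 < p) (hq : 0 < q) (hθ0 : 0 < θ) (hθ1 : θ < 1)
    (hpq : p ≠ q) :
    StrictConcaveOn ℝ (Set.Ioo (0:ℝ) 1)
      (fun t => ((1-t)*p + t*q) ^ θ * ((1-t)*q + t*p) ^ (1-θ)) := by
  refine ⟨convex_Ioo 0 1, fun x hx y hy hxy lam mu hlam hmu hsum => ?_⟩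
  obtain ⟨hx0, hx1⟩ := hx
  obtain ⟨hy0, hy1⟩ := hy
  have hA1 : 0 < (1-x)*p + x*q := by nlinarith
  have hB1 : 0 < (1-x)*q + x*p := by nlinarith
  have hA2 : 0 < (1-y)*p + y*q := by nlinarith
  have hB2 : 0 < (1-y)*q + y*p := by nlinarith
  have hne : ((1-x)*p + x*q) * ((1-y)*q + y*p) ≠ ((1-y)*p + y*q) * ((1-x)*q + x*p) := by
    intro h
    have hdiff : ((1-x)*p + x*q) * ((1-y)*q + y*p) - ((1-y)*p + y*q) * ((1-x)*q + x*p)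
        = (p - q) * (p + q) * (y - x) := by ring
    have : (p - q) * (p + q) * (y - x) = 0 := by rw [← hdiff]; linarith
    rcases mul_eq_zero.1 this with h' | h'
    · rcases mul_eq_zero.1 h' with h'' | h''
      · exact hpq (by linarith)
      · nlinarith
    · exact hxy (by linarith)
  have key := gm_combo_strict hθ0 hθ1 hlam hmu hsum hA1 hB1 hA2 hB2 hne
  have e1 : (1-(lam*x+mu*y))*p + (lam*x+mu*y)*q
      = lam*((1-x)*p + x*q) + mu*((1-y)*p + y*q) := by linear_combination (-p) * hsum
  have e2 : (1-(lam*x+mu*y))*q + (lam*x+mu*y)*p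
      = lam*((1-x)*q + x*p) + mu*((1-y)*q + y*p) := by linear_combination (-q) * hsum
  simp only [smul_eq_mul]
  rw [e1, e2]
  exact key

lemma concaveOn_congr' {f g : ℝ → ℝ} {s : Set ℝ} (hg : ConcaveOn ℝ s g)
    (h : ∀ x ∈ s, f x = g x) : ConcaveOn ℝ s f := by
  refine ⟨hg.1, fun x hx y hy a b ha hb hab => ?_⟩
  rw [h _ hx, h _ hy, h _ (hg.1 hx hy ha hb hab)]
  exact hg.2 hx hy ha hb hab

lemma strictConcaveOn_congr' {f g : ℝ → ℝ} {s : Set ℝ} (hg : StrictConcaveOn ℝ s g)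
    (h : ∀ x ∈ s, f x = g x) : StrictConcaveOn ℝ s f := by
  refine ⟨hg.1, fun x hx y hy hxy a b ha hb hab => ?_⟩
  rw [h _ hx, h _ hy, h _ (hg.1 hx hy ha.le hb.le hab)]
  exact hg.2 hx hy hxy ha hb hab

/-- Levinger's function of Fiedler's 3-parameter Toeplitz matrix (with
`u, v, w > 0`) is concave on `(0,1)`, strictly if `u ≠ v`. -/
theorem levinger_fiedler_toeplitz_concave {n : ℕ} (hn : 3 ≤ n) (u v w : ℝ)
    (hu : 0 < u) (hv : 0 < v) (hw : 0 < w)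
    (A : Matrix (Fin n) (Fin n) ℝ)
    (hA : ∀ i j : Fin n, A i j =
      if (i:ℕ) = (j:ℕ) then w
      else if (j:ℕ) = (i:ℕ) + 1 then u
      else if (i:ℕ) = 0 ∧ (j:ℕ) = n - 1 then u
      else if (i:ℕ) = (j:ℕ) + 1 then v
      else if (i:ℕ) = n - 1 ∧ (j:ℕ) = 0 then v
      else 0) :
    ConcaveOn ℝ (Set.Ioo (0:ℝ) 1)
      (fun t : ℝ => specRad ((1 - t) • A + t • Aᵀ)) ∧
    (u ≠ v →
      StrictConcaveOn ℝ (Set.Ioo (0:ℝ) 1)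
        (fun t : ℝ => specRad ((1 - t) • A + t • Aᵀ))) := by
  obtain ⟨k, rfl⟩ : ∃ k, n = k + 3 := ⟨n - 3, by omega⟩
  set α : ℝ := ((k:ℝ)+2)/((k:ℝ)+3) with hα
  have hk3 : ((k:ℝ)+3) ≠ 0 := by positivity
  have hα0 : 0 < α := by positivity
  have hα1 : α < 1 := by
    rw [hα, div_lt_one (by positivity)]; linarith
  set g : ℝ → ℝ := fun t => w + (((1-t)*u + t*v) ^ α * ((1-t)*v + t*u) ^ (1-α)
      + ((1-t)*u + t*v) ^ (1-α) * ((1-t)*v + t*u) ^ α) with hg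
  have heq : ∀ t ∈ Set.Ioo (0:ℝ) 1, specRad ((1 - t) • A + t • Aᵀ) = g t := by
    intro t ht
    obtain ⟨ht0, ht1⟩ := ht
    set a : ℝ := (1-t)*u + t*v with ha
    set b : ℝ := (1-t)*v + t*u with hb
    have hap : 0 < a := by rw [ha]; nlinarith
    have hbp : 0 < b := by rw [hb]; nlinarith
    set X : ℝ := a ^ ((1:ℝ)/((k:ℝ)+3)) with hX
    set Y : ℝ := b ^ ((1:ℝ)/((k:ℝ)+3)) with hY
    have hXp : 0 < X := Real.rpow_pos_of_pos hap _
    have hYp : 0 < Y := Real.rpow_pos_of_pos hbp _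
    have hXa : X ^ (k+3) = a := by
      rw [hX, ← Real.rpow_natCast (a ^ ((1:ℝ)/((k:ℝ)+3))) (k+3), ← Real.rpow_mul hap.le]
      rw [show (1:ℝ)/((k:ℝ)+3) * ((k+3 : ℕ) : ℝ) = 1 by push_cast; field_simp]
      exact Real.rpow_one a
    have hYb : Y ^ (k+3) = b := by
      rw [hY, ← Real.rpow_natCast (b ^ ((1:ℝ)/((k:ℝ)+3))) (k+3), ← Real.rpow_mul hbp.le]
      rw [show (1:ℝ)/((k:ℝ)+3) * ((k+3 : ℕ) : ℝ) = 1 by push_cast; field_simp]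
      exact Real.rpow_one b
    have hXa2 : X ^ (k+2) = a ^ α := by
      rw [hX, ← Real.rpow_natCast (a ^ ((1:ℝ)/((k:ℝ)+3))) (k+2), ← Real.rpow_mul hap.le]
      congr 1
      push_cast
      rw [hα]
      field_simp
    have hYb2 : Y ^ (k+2) = b ^ α := by
      rw [hY, ← Real.rpow_natCast (b ^ ((1:ℝ)/((k:ℝ)+3))) (k+2), ← Real.rpow_mul hbp.le]
      congr 1
      push_cast
      rw [hα]
      field_simp
    have hX1 : X = a ^ (1-α) := by
      rw [hX]
      congr 1
      rw [hα]
      field_simp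
      norm_num
    have hY1 : Y = b ^ (1-α) := by
      rw [hY]
      congr 1
      rw [hα]
      field_simp
      norm_num
    rw [fPM_matB (by omega) u v w A hA t, ← ha, ← hb, ← hXa, ← hYb,
      specRad_fPM w X Y hw.le hXp hYp, hXa2, hYb2, hX1, hY1, hg]
    ring
  have hcon1 : ConcaveOn ℝ (Set.Ioo (0:ℝ) 1)
      (fun t => ((1-t)*u + t*v) ^ α * ((1-t)*v + t*u) ^ (1-α)) :=
    concave_piece α u v hu hv hα0.le hα1.le
  have hcon2 : ConcaveOn ℝ (Set.Ioo (0:ℝ) 1)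
      (fun t => ((1-t)*u + t*v) ^ (1-α) * ((1-t)*v + t*u) ^ α) := by
    have h := concave_piece (1-α) u v hu hv (by linarith) (by linarith)
    have hfun : (fun t : ℝ => ((1-t)*u + t*v) ^ (1-α) * ((1-t)*v + t*u) ^ (1-(1-α)))
        = (fun t : ℝ => ((1-t)*u + t*v) ^ (1-α) * ((1-t)*v + t*u) ^ α) := by
      funext t
      rw [show (1:ℝ)-(1-α) = α by ring]
    rwa [hfun] at h
  have hcg : ConcaveOn ℝ (Set.Ioo (0:ℝ) 1) g := by
    rw [hg]
    exact (concaveOn_const w (convex_Ioo 0 1)).add (hcon1.add hcon2)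
  refine ⟨concaveOn_congr' hcg heq, fun huv => ?_⟩
  have hstrict1 : StrictConcaveOn ℝ (Set.Ioo (0:ℝ) 1)
      (fun t => ((1-t)*u + t*v) ^ α * ((1-t)*v + t*u) ^ (1-α)) :=
    strict_concave_piece α u v hu hv hα0 hα1 huv
  have hsg : StrictConcaveOn ℝ (Set.Ioo (0:ℝ) 1) g := by
    rw [hg]
    exact (concaveOn_const w (convex_Ioo 0 1)).add_strictConcaveOn
      (hstrict1.add_concaveOn hcon2)
  exact strictConcaveOn_congr' hsg heq
end

section
/- Let n ≥ 3 and u, v, w > 0, and let A ∈ ℝ^{n×n} be the Toeplitz matrix with A_{ii} = w, A_{i,i+1} = u for i = 1,…,n−1, A_{1,n} = u, A_{i+1,i} = v for i = 1,…,n−1, A_{n,1} = v, and all other entries 0. Then for all t ∈ [0,1], the spectral radius of (1−t)A + tAᵀ equals w + ((1−t)u + tv)^{1−1/n}((1−t)v + tu)^{1/n} + ((1−t)u + tv)^{1/n}((1−t)v + tu)^{1−1/n}. -/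
open Matrix

open scoped ENNReal NNReal
attribute [local instance] Matrix.linftyOpNormedRing Matrix.linftyOpNormedAlgebra


lemma circ_rowsum {n : ℕ} [NeZero n] {M : Type*} [AddCommMonoid M] (g : Fin n → M) (i : Fin n) :
    ∑ j : Fin n, g (i - j) = ∑ k : Fin n, g k :=
  Fintype.sum_equiv (Equiv.subLeft i) _ _ (fun _ => rfl)

section FinFacts
variable {n : ℕ} [NeZero n] (hn : 3 ≤ n)
include hn

lemma fin_val_one : ((1 : Fin n) : ℕ) = 1 := by
  have : NeZero n := ⟨by omega⟩
  rw [Fin.val_one']; exact Nat.mod_eq_of_lt (by omega)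

lemma fin_one_ne_zero : (1 : Fin n) ≠ 0 := by
  have : NeZero n := ⟨by omega⟩
  intro h
  have h2 := congrArg Fin.val h
  rw [fin_val_one hn, Fin.val_zero] at h2
  omega

lemma fin_neg_one_ne_zero : (-1 : Fin n) ≠ 0 := by
  intro h
  apply fin_one_ne_zero hn
  have h2 : (-1 : Fin n) + 1 = 0 + 1 := by rw [h]
  rw [neg_add_cancel, zero_add] at h2
  exact h2.symm

lemma fin_neg_one_ne_one : (-1 : Fin n) ≠ 1 := by
  have : NeZero n := ⟨by omega⟩
  intro h
  have h2 : (-1 : Fin n) + 1 = 1 + 1 := by rw [h]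
  rw [neg_add_cancel] at h2
  have h3 := congrArg Fin.val h2
  rw [Fin.val_zero, Fin.val_add, fin_val_one hn, Nat.mod_eq_of_lt (by omega)] at h3
  omega

lemma fin_succ_iff (p q : Fin n) :
    p = q + 1 ↔ ((p:ℕ) = (q:ℕ) + 1 ∨ ((q:ℕ) = n - 1 ∧ (p:ℕ) = 0)) := by
  have : NeZero n := ⟨by omega⟩
  have hp := p.isLt
  have hq := q.isLt
  rw [Fin.ext_iff, Fin.val_add, fin_val_one hn]
  rcases Nat.lt_or_ge ((q:ℕ)+1) n with h|h
  · rw [Nat.mod_eq_of_lt h]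
    omega
  · have hqn : (q:ℕ) + 1 = n := by omega
    rw [hqn, Nat.mod_self]
    omega

end FinFacts

lemma circ_specRad {n : ℕ} (hn : 0 < n) (f : Fin n → ℝ) (hf : ∀ k, 0 ≤ f k) :
    spectralRadius ℂ ((circulant f).map (fun x : ℝ => (x : ℂ)))
      = ENNReal.ofReal (∑ k, f k) := by
  have : NeZero n := ⟨hn.ne'⟩
  set M : Matrix (Fin n) (Fin n) ℂ := (circulant f).map (fun x : ℝ => (x : ℂ)) with hM
  have hMapp : ∀ i j, M i j = ((f (i - j) : ℝ) : ℂ) := fun i j => rfl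
  have hS : 0 ≤ ∑ k, f k := Finset.sum_nonneg fun k _ => hf k
  have hmem : (((∑ k, f k : ℝ) : ℂ)) ∈ spectrum ℂ M := by
    rw [spectrum.mem_iff]
    rw [Matrix.isUnit_iff_isUnit_det, isUnit_iff_ne_zero]
    push_neg
    rw [← Matrix.exists_mulVec_eq_zero_iff]
    refine ⟨fun _ => 1, ?_, ?_⟩
    · intro h
      have := congrFun h ⟨0, hn⟩
      simp at this
    · funext i
      simp only [Matrix.sub_mulVec, Matrix.mulVec, dotProduct, Pi.sub_apply, Pi.zero_apply]
      have h1 : ∑ j, algebraMap ℂ (Matrix (Fin n) (Fin n) ℂ) ((∑ k, f k : ℝ) : ℂ) i j * 1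
          = ((∑ k, f k : ℝ) : ℂ) := by
        simp [Matrix.algebraMap_matrix_apply, Finset.sum_ite_eq, Finset.mem_univ]
      have h2 : ∑ j, M i j * 1 = ((∑ k, f k : ℝ) : ℂ) := by
        simp only [mul_one, hMapp]
        rw [circ_rowsum (fun k => ((f k : ℝ) : ℂ)) i]
        push_cast
        ring
      simp only [Matrix.sub_apply, sub_mul, Finset.sum_sub_distrib]
      rw [h1, h2, sub_self]
  have hnorm : ‖M‖₊ = (∑ k, f k).toNNReal := by
    rw [Matrix.linfty_opNNNorm_def]
    have hrow : ∀ i : Fin n, ∑ j, ‖M i j‖₊ = (∑ k, f k).toNNReal := by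
      intro i
      have heach : ∀ j, ‖M i j‖₊ = (f (i - j)).toNNReal := by
        intro j
        rw [hMapp, Complex.nnnorm_real, Real.nnnorm_of_nonneg (hf _),
          Real.toNNReal_of_nonneg (hf _)]
      simp only [heach]
      rw [circ_rowsum (fun k => (f k).toNNReal) i]
      exact (Real.toNNReal_sum_of_nonneg (fun k _ => hf k)).symm
    simp only [hrow]
    exact Finset.sup_const ⟨⟨0, hn⟩, Finset.mem_univ _⟩ _
  apply le_antisymm
  · calc spectralRadius ℂ M ≤ (‖M‖₊ : ℝ≥0∞) :=
          spectrum.spectralRadius_le_nnnorm (𝕜 := ℂ) (a := M)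
      _ = ENNReal.ofReal (∑ k, f k) := by rw [hnorm, ENNReal.ofReal]
  · refine le_trans ?_ (le_iSup₂ (f := fun k (_ : k ∈ spectrum ℂ M) => (‖k‖₊ : ℝ≥0∞)) _ hmem)
    rw [Complex.nnnorm_real, Real.nnnorm_of_nonneg hS, ENNReal.ofReal, Real.toNNReal_of_nonneg hS]


set_option maxHeartbeats 1000000 in
/-- Closed formula for the spectral radius of the Levinger homotopy of
Fiedler's 3-parameter Toeplitz matrix with `u, v, w > 0`.  The powers are real
powers (`Real.rpow`). -/
theorem specRad_levinger_fiedler_toeplitz {n : ℕ} (hn : 3 ≤ n) (u v w : ℝ)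
    (hu : 0 < u) (hv : 0 < v) (hw : 0 < w)
    (A : Matrix (Fin n) (Fin n) ℝ)
    (hA : ∀ i j : Fin n, A i j =
      if (i:ℕ) = (j:ℕ) then w
      else if (j:ℕ) = (i:ℕ) + 1 then u
      else if (i:ℕ) = 0 ∧ (j:ℕ) = n - 1 then u
      else if (i:ℕ) = (j:ℕ) + 1 then v
      else if (i:ℕ) = n - 1 ∧ (j:ℕ) = 0 then v
      else 0) :
    ∀ t ∈ Set.Icc (0:ℝ) 1,
      specRad ((1 - t) • A + t • Aᵀ) =
        w + ((1 - t)*u + t*v) ^ (1 - 1/(n:ℝ)) * ((1 - t)*v + t*u) ^ (1/(n:ℝ))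
          + ((1 - t)*u + t*v) ^ (1/(n:ℝ)) * ((1 - t)*v + t*u) ^ (1 - 1/(n:ℝ)) := by
  rintro t ⟨ht0, ht1⟩
  have hn0 : 0 < n := by omega
  have : NeZero n := ⟨by omega⟩
  have hmin : 0 < min u v := lt_min hu hv
  have hconv : ∀ x y : ℝ, 0 < x → 0 < y → 0 < (1-t)*x + t*y := by
    intro x y hx hy
    calc (0:ℝ) < min x y := lt_min hx hy
      _ = (1-t)*min x y + t*min x y := by ring
      _ ≤ (1-t)*x + t*y := add_le_add
          (mul_le_mul_of_nonneg_left (min_le_left _ _) (by linarith))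
          (mul_le_mul_of_nonneg_left (min_le_right _ _) ht0)
  obtain ⟨a, ha, haeq⟩ : ∃ x : ℝ, 0 < x ∧ x = (1-t)*u + t*v :=
    ⟨_, hconv u v hu hv, rfl⟩
  obtain ⟨b, hb, hbeq⟩ : ∃ x : ℝ, 0 < x ∧ x = (1-t)*v + t*u :=
    ⟨_, hconv v u hv hu, rfl⟩
  obtain ⟨r, hr, hrn, har, hbr⟩ : ∃ r : ℝ, 0 < r ∧ r ^ n = b / a ∧
      a * r = a ^ (1 - 1/(n:ℝ)) * b ^ (1/(n:ℝ)) ∧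
      b / r = a ^ (1/(n:ℝ)) * b ^ (1 - 1/(n:ℝ)) := by
    have hba : (0:ℝ) < b / a := div_pos hb ha
    have hac : (0:ℝ) < a ^ (1/(n:ℝ)) := Real.rpow_pos_of_pos ha _
    have hbc : (0:ℝ) < b ^ (1/(n:ℝ)) := Real.rpow_pos_of_pos hb _
    refine ⟨(b/a) ^ (1/(n:ℝ)), Real.rpow_pos_of_pos hba _, ?_, ?_, ?_⟩
    · rw [← Real.rpow_natCast ((b/a) ^ (1/(n:ℝ))) n, ← Real.rpow_mul hba.le]
      rw [one_div_mul_cancel (by exact_mod_cast hn0.ne' : (n:ℝ) ≠ 0), Real.rpow_one]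
    · rw [Real.div_rpow hb.le ha.le, Real.rpow_sub ha, Real.rpow_one]
      field_simp
    · rw [Real.div_rpow hb.le ha.le, Real.rpow_sub hb, Real.rpow_one]
      rw [div_div_eq_mul_div]
      ring
  -- the circulant symbol
  set f : Fin n → ℝ := fun k => if k = 0 then w else if k = 1 then b/r else if k = -1 then a*r
      else 0 with hfdef
  have hf : ∀ k, 0 ≤ f k := by
    intro k
    simp only [hfdef]
    split_ifs <;> positivity
  -- entrywise values of B
  set B : Matrix (Fin n) (Fin n) ℝ := (1 - t) • A + t • Aᵀ with hBdef
  have hBval : ∀ i j : Fin n, B i j =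
      (if (i:ℕ) = (j:ℕ) then w
      else if (j:ℕ) = (i:ℕ) + 1 then a
      else if (i:ℕ) = 0 ∧ (j:ℕ) = n - 1 then a
      else if (i:ℕ) = (j:ℕ) + 1 then b
      else if (i:ℕ) = n - 1 ∧ (j:ℕ) = 0 then b
      else 0) := by
    intro i j
    have hp := i.isLt
    have hq := j.isLt
    have hBapp : B i j = (1-t) * A i j + t * A j i := by
      simp [hBdef, Matrix.add_apply, Matrix.smul_apply, transpose_apply, smul_eq_mul]
    rw [hBapp, hA i j, hA j i]
    split_ifs <;> first
      | omega
      | linarith [haeq, hbeq]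
  -- key conjugation identity, entrywise
  have key : ∀ i j : Fin n, B i j = r ^ (i:ℕ) * f (i - j) * (r ^ (j:ℕ))⁻¹ := by
    intro i j
    have hp := i.isLt
    have hq := j.isLt
    have hrpow : ∀ m : ℕ, (0:ℝ) < r ^ m := fun m => pow_pos hr m
    rw [hBval i j]
    by_cases hij : i = j
    · subst hij
      rw [sub_self]
      simp only [hfdef, if_pos rfl, if_pos rfl, if_true]
      field_simp
    by_cases h1 : i = j + 1
    · have hsub : i - j = 1 := by rw [h1]; abel
      rw [hsub]
      simp only [hfdef, if_neg (fin_one_ne_zero hn), if_pos rfl, if_true]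
      rcases (fin_succ_iff hn i j).mp h1 with hpq | ⟨hq1, hp0⟩
      · rw [if_neg (by omega), if_neg (by omega), if_neg (by omega), if_pos hpq, hpq, pow_succ]
        field_simp
        try ring
        try tauto
      · rw [if_neg (by omega), if_neg (by omega), if_pos ⟨hp0, hq1⟩, hp0, hq1, pow_zero]
        have hrs : r ^ (n-1) * r = r ^ n := by
          rw [← pow_succ]; congr 1; omega
        have hb' : b = a * (r ^ (n-1) * r) := by
          rw [hrs, hrn]; field_simp
        rw [hb']
        field_simp
        try ring
        try tauto
    by_cases h3 : j = i + 1
    · have hsub : i - j = -1 := by rw [h3]; abel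
      rw [hsub]
      simp only [hfdef, if_neg (fin_neg_one_ne_zero hn), if_neg (fin_neg_one_ne_one hn),
        if_pos rfl]
      rcases (fin_succ_iff hn j i).mp h3 with hqp | ⟨hp1, hq0⟩
      · rw [if_neg (by omega), if_pos hqp, hqp, pow_succ]
        field_simp
        try ring
        try tauto
      · rw [if_neg (by omega), if_neg (by omega), if_neg (by omega), if_neg (by omega),
          if_pos ⟨hp1, hq0⟩, hp1, hq0, pow_zero]
        have hrs : r ^ (n-1) * r = r ^ n := by
          rw [← pow_succ]; congr 1; omega
        have hb' : b = a * (r ^ (n-1) * r) := by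
          rw [hrs, hrn]; field_simp
        rw [hb']
        field_simp
        try ring
        try tauto
    · have c1 : ¬ (i:ℕ) = (j:ℕ) := fun h => hij (Fin.ext h)
      have c2 : ¬ (j:ℕ) = (i:ℕ) + 1 := fun h => h3 ((fin_succ_iff hn j i).mpr (Or.inl h))
      have c3 : ¬ ((i:ℕ) = 0 ∧ (j:ℕ) = n - 1) :=
        fun h => h1 ((fin_succ_iff hn i j).mpr (Or.inr ⟨h.2, h.1⟩))
      have c4 : ¬ (i:ℕ) = (j:ℕ) + 1 := fun h => h1 ((fin_succ_iff hn i j).mpr (Or.inl h))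
      have c5 : ¬ ((i:ℕ) = n - 1 ∧ (j:ℕ) = 0) :=
        fun h => h3 ((fin_succ_iff hn j i).mpr (Or.inr ⟨h.1, h.2⟩))
      rw [if_neg c1, if_neg c2, if_neg c3, if_neg c4, if_neg c5]
      have d1 : i - j ≠ 0 := sub_ne_zero.mpr hij
      have d2 : i - j ≠ 1 := by
        intro h
        apply h1
        have := sub_eq_iff_eq_add.mp h
        rw [this]; abel
      have d3 : i - j ≠ -1 := by
        intro h
        apply h3
        have := sub_eq_iff_eq_add.mp h
        rw [this]; abel
      simp only [hfdef, if_neg d1, if_neg d2, if_neg d3]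
      ring
  -- conjugation over ℂ
  have hdne : ∀ i : Fin n, ((r:ℂ) ^ (i:ℕ)) ≠ 0 :=
    fun i => pow_ne_zero _ (by exact_mod_cast hr.ne')
  have hU1 : diagonal (fun i : Fin n => (r:ℂ) ^ (i:ℕ))
      * diagonal (fun i : Fin n => ((r:ℂ) ^ (i:ℕ))⁻¹) = 1 := by
    rw [diagonal_mul_diagonal,
      show (fun i : Fin n => (r:ℂ) ^ (i:ℕ) * ((r:ℂ) ^ (i:ℕ))⁻¹) = fun _ => 1 from
        funext fun i => mul_inv_cancel₀ (hdne i), diagonal_one]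
  have hU2 : diagonal (fun i : Fin n => ((r:ℂ) ^ (i:ℕ))⁻¹)
      * diagonal (fun i : Fin n => (r:ℂ) ^ (i:ℕ)) = 1 := by
    rw [diagonal_mul_diagonal,
      show (fun i : Fin n => ((r:ℂ) ^ (i:ℕ))⁻¹ * (r:ℂ) ^ (i:ℕ)) = fun _ => 1 from
        funext fun i => inv_mul_cancel₀ (hdne i), diagonal_one]
  set U : (Matrix (Fin n) (Fin n) ℂ)ˣ := ⟨_, _, hU1, hU2⟩ with hUdef
  have hconj : B.map (fun x : ℝ => (x:ℂ)) =
      (U : Matrix (Fin n) (Fin n) ℂ) * ((circulant f).map (fun x : ℝ => (x:ℂ)))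
        * ((U⁻¹ : (Matrix (Fin n) (Fin n) ℂ)ˣ) : Matrix (Fin n) (Fin n) ℂ) := by
    have hUval : (U : Matrix (Fin n) (Fin n) ℂ) = diagonal (fun i : Fin n => (r:ℂ) ^ (i:ℕ)) := rfl
    have hUinv : ((U⁻¹ : (Matrix (Fin n) (Fin n) ℂ)ˣ) : Matrix (Fin n) (Fin n) ℂ)
        = diagonal (fun i : Fin n => ((r:ℂ) ^ (i:ℕ))⁻¹) := rfl
    rw [hUval, hUinv]
    ext i j
    rw [Matrix.mul_diagonal, Matrix.diagonal_mul, Matrix.map_apply, Matrix.map_apply,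
      Matrix.circulant_apply, key i j]
    push_cast
    ring
  have hspec : spectralRadius ℂ (B.map (fun x : ℝ => (x:ℂ)))
      = spectralRadius ℂ ((circulant f).map (fun x : ℝ => (x:ℂ))) := by
    unfold spectralRadius
    rw [hconj, spectrum.units_conjugate]
  -- sum of f
  have hsum : ∑ k : Fin n, f k = w + b/r + a*r := by
    have h01 : (0 : Fin n) ∉ (insert 1 ({-1} : Finset (Fin n))) := by
      simp only [Finset.mem_insert, Finset.mem_singleton]
      push_neg
      exact ⟨fun h => fin_one_ne_zero hn h.symm, fun h => fin_neg_one_ne_zero hn h.symm⟩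
    have h1m : (1 : Fin n) ∉ ({-1} : Finset (Fin n)) := by
      simp only [Finset.mem_singleton]
      exact fun h => fin_neg_one_ne_one hn h.symm
    rw [← Finset.sum_subset (Finset.subset_univ (insert 0 (insert 1 ({-1} : Finset (Fin n)))))
      (fun k _ hk => ?_)]
    · rw [Finset.sum_insert h01, Finset.sum_insert h1m, Finset.sum_singleton]
      simp only [hfdef, if_pos rfl, if_neg (fin_one_ne_zero hn),
        if_neg (fin_neg_one_ne_zero hn), if_neg (fin_neg_one_ne_one hn),
        eq_self_iff_true, if_true]
      ring
    · simp only [Finset.mem_insert, Finset.mem_singleton] at hk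
      push_neg at hk
      simp only [hfdef, if_neg hk.1, if_neg hk.2.1, if_neg hk.2.2]
  -- finish
  have hSnn : 0 ≤ ∑ k, f k := Finset.sum_nonneg fun k _ => hf k
  show (spectralRadius ℂ (B.map (fun x : ℝ => (x : ℂ)))).toReal = _
  rw [hspec, circ_specRad hn0 f hf, ENNReal.toReal_ofReal hSnn, hsum, hbr, har,
    ← haeq, ← hbeq]
  ring
end

section
/- Let n ≥ 2 and let A ∈ ℝ^{n×n} be a nonnegative weighted shift matrix: A_{i,i+1} = c_i ≥ 0 for i = 1,…,n−1 and all other entries 0, with c_i > 0 for at least one i. Then Levinger's function r(t) := ρ((1−t)A + tAᵀ) is strictly concave on t ∈ (0,1). -/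
open Matrix
open scoped NNReal ENNReal

section Aux

variable {m : Type*} [Fintype m] [DecidableEq m]

lemma specRad_aux_ne_top (M : Matrix m m ℂ) : spectralRadius ℂ M ≠ ⊤ := by
  have hfin := Matrix.finite_spectrum M
  rw [spectralRadius]
  have hb : ∀ k ∈ spectrum ℂ M,
      (‖k‖₊ : ℝ≥0∞) ≤ ((hfin.toFinset.sup fun z => ‖z‖₊ : ℝ≥0) : ℝ≥0∞) := by
    intro k hk
    exact ENNReal.coe_le_coe.mpr (Finset.le_sup (hfin.mem_toFinset.mpr hk))
  exact ne_top_of_le_ne_top ENNReal.coe_ne_top (iSup₂_le hb)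

lemma specRad_aux_zero : spectralRadius ℂ (0 : Matrix m m ℂ) = 0 := by
  have hsub : spectrum ℂ (0 : Matrix m m ℂ) ⊆ {0} := by
    intro z hz
    by_contra hz0
    simp only [Set.mem_singleton_iff] at hz0
    have hunit : IsUnit (algebraMap ℂ (Matrix m m ℂ) z - 0) := by
      rw [sub_zero]
      exact (Ne.isUnit hz0).map (algebraMap ℂ (Matrix m m ℂ))
    exact (spectrum.notMem_iff.mpr hunit) hz
  rw [spectralRadius]
  refine le_antisymm (iSup₂_le fun k hk => ?_) zero_le
  rw [Set.mem_singleton_iff.mp (hsub hk)]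
  simp

lemma specRad_smul (u : ℝ) (hu : 0 ≤ u) (M : Matrix m m ℝ) :
    specRad (u • M) = u * specRad M := by
  have hmap : (u • M).map (fun x : ℝ => (x : ℂ))
      = (u : ℂ) • M.map (fun x : ℝ => (x : ℂ)) := by
    ext i j
    simp only [Matrix.map_apply, Matrix.smul_apply, smul_eq_mul]
    push_cast
    ring
  rcases eq_or_lt_of_le hu with h0 | hupos
  · rw [← h0, zero_smul, zero_mul]
    unfold specRad
    rw [show (0 : Matrix m m ℝ).map (fun x : ℝ => (x : ℂ)) = 0 from by ext i j; simp]
    rw [specRad_aux_zero]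
    rfl
  · set Mc := M.map (fun x : ℝ => (x : ℂ)) with hMc
    have huc : (u : ℂ) ≠ 0 := by exact_mod_cast hupos.ne'
    set r : ℂˣ := Units.mk0 (u : ℂ) huc with hr
    have hσ : spectrum ℂ ((u : ℂ) • Mc) = (fun z => (u : ℂ) * z) '' spectrum ℂ Mc := by
      have h1 := spectrum.unit_smul_eq_smul Mc r
      rw [Units.smul_def, show ((r : ℂ)) = (u : ℂ) from rfl] at h1
      rw [h1, ← Set.image_smul]
      ext z
      simp [Units.smul_def, smul_eq_mul, hr]
    have hrad : spectralRadius ℂ ((u : ℂ) • Mc)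
        = (‖(u : ℂ)‖₊ : ℝ≥0∞) * spectralRadius ℂ Mc := by
      unfold spectralRadius
      rw [hσ, iSup_image]
      simp_rw [nnnorm_mul, ENNReal.coe_mul, ← ENNReal.mul_iSup]
    unfold specRad
    rw [hmap, ← hMc, hrad, ENNReal.toReal_mul]
    congr 1
    rw [ENNReal.coe_toReal, coe_nnnorm, Complex.norm_real, Real.norm_eq_abs,
      abs_of_nonneg hu]

lemma specRad_pos_of_symm (S : Matrix m m ℝ) (hsymm : Sᵀ = S) (hne : S ≠ 0) :
    0 < specRad S := by
  set Sc := S.map (fun x : ℝ => (x : ℂ)) with hSc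
  have hherm : Sc.IsHermitian := by
    rw [Matrix.IsHermitian]
    ext i j
    have h1 : S j i = S i j := congrFun (congrFun hsymm.symm j) i
    simp [Sc, Matrix.conjTranspose_apply, Matrix.map_apply, Complex.conj_ofReal, h1]
  have hScne : Sc ≠ 0 := by
    intro h
    apply hne
    ext i j
    have h2 := congrFun (congrFun h i) j
    simpa [Sc, Matrix.map_apply, Complex.ofReal_eq_zero] using h2
  obtain ⟨v, t₀, ht₀, hv, hvec⟩ := hherm.exists_eigenvector_of_ne_zero hScne
  have hev : Module.End.HasEigenvector (R := ℂ) (M := m → ℂ)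
      (Matrix.toLinAlgEquiv' Sc) ((t₀ : ℝ) : ℂ) v := by
    refine ⟨Module.End.mem_eigenspace_iff.mpr ?_, hv⟩
    show Matrix.toLinAlgEquiv' Sc v = _
    rw [Matrix.toLinAlgEquiv'_apply, hvec]
    ext k
    simp [Pi.smul_apply, Complex.real_smul]
  have hmem : ((t₀ : ℝ) : ℂ) ∈ spectrum ℂ Sc := by
    have h1 := (Module.End.hasEigenvalue_of_hasEigenvector hev).mem_spectrum
    rwa [show spectrum ℂ (Matrix.toLinAlgEquiv' Sc : Module.End ℂ (m → ℂ))
      = spectrum ℂ Sc from AlgEquiv.spectrum_eq Matrix.toLinAlgEquiv' Sc] at h1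
  have hge : (‖((t₀ : ℝ) : ℂ)‖₊ : ℝ≥0∞) ≤ spectralRadius ℂ Sc :=
    le_iSup₂ (f := fun k (_ : k ∈ spectrum ℂ Sc) => (‖k‖₊ : ℝ≥0∞)) _ hmem
  have hnz : ((t₀ : ℝ) : ℂ) ≠ 0 := by exact_mod_cast ht₀
  have h0 : (0 : ℝ≥0∞) < (‖((t₀ : ℝ) : ℂ)‖₊ : ℝ≥0∞) := by
    rw [ENNReal.coe_pos]
    simpa using hnz
  have hρpos : 0 < spectralRadius ℂ Sc := lt_of_lt_of_le h0 hge
  unfold specRad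
  rw [← hSc]
  exact ENNReal.toReal_pos hρpos.ne' (specRad_aux_ne_top _)

end Aux

section Levinger

variable {n : ℕ}

lemma specRad_levinger_eq (A : Matrix (Fin n) (Fin n) ℝ)
    (hshift : ∀ i j : Fin n, (j : ℕ) ≠ (i : ℕ) + 1 → A i j = 0)
    {t : ℝ} (ht : t ∈ Set.Ioo (0:ℝ) 1) :
    specRad ((1 - t) • A + t • Aᵀ) = Real.sqrt (t * (1 - t)) * specRad (A + Aᵀ) := by
  obtain ⟨ht0, ht1⟩ := ht
  have h1t : (0:ℝ) < 1 - t := by linarith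
  set st := Real.sqrt t with hst
  set s1 := Real.sqrt (1 - t) with hs1
  have hstpos : 0 < st := Real.sqrt_pos.mpr ht0
  have hs1pos : 0 < s1 := Real.sqrt_pos.mpr h1t
  have hst2 : st ^ 2 = t := Real.sq_sqrt ht0.le
  have hs12 : s1 ^ 2 = 1 - t := Real.sq_sqrt h1t.le
  set u : ℝ := st * s1 with hu
  set B := (1 - t) • A + t • Aᵀ with hB
  set S := A + Aᵀ with hSdef
  set d : Fin n → ℝ := fun i => (st / s1) ^ (i : ℕ) with hd
  have hdne : ∀ i, d i ≠ 0 := fun i =>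
    pow_ne_zero _ (div_ne_zero hstpos.ne' hs1pos.ne')
  -- the key real matrix identity
  have key : B * Matrix.diagonal d = Matrix.diagonal d * (u • S) := by
    ext i j
    rw [Matrix.mul_diagonal, Matrix.diagonal_mul]
    simp only [hB, hSdef, Matrix.add_apply, Matrix.smul_apply, Matrix.transpose_apply,
      smul_eq_mul]
    rw [hu]
    by_cases hj : (j : ℕ) = (i : ℕ) + 1
    · have hji : A j i = 0 := hshift j i (by omega)
      have hdj : d j = d i * (st / s1) := by
        simp only [hd, hj, pow_succ]
      have h1 : (1 - t) * (st / s1) = st * s1 := by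
        rw [← hs12]
        field_simp
      rw [hji, hdj]
      linear_combination (A i j * d i) * h1
    · by_cases hi : (i : ℕ) = (j : ℕ) + 1
      · have hij : A i j = 0 := hshift i j (by omega)
        have hdi : d i = d j * (st / s1) := by
          simp only [hd, hi, pow_succ]
        have h2 : st / s1 * (st * s1) = t := by
          rw [← hst2]
          field_simp
        rw [hij, hdi]
        linear_combination (-(A j i * d j)) * h2
      · have hij : A i j = 0 := hshift i j (by omega)
        have hji : A j i = 0 := hshift j i (by omega)
        rw [hij, hji]
        ring
  -- move everything to ℂ
  set f : ℝ →+* ℂ := Complex.ofRealHom with hf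
  have hfc : (fun x : ℝ => (x : ℂ)) = ⇑f := rfl
  set Bc := B.map (fun x : ℝ => (x : ℂ)) with hBc
  set Sc := S.map (fun x : ℝ => (x : ℂ)) with hScdef
  set Dc : Matrix (Fin n) (Fin n) ℂ := Matrix.diagonal (fun i => ((d i : ℝ) : ℂ)) with hDc
  set Dc' : Matrix (Fin n) (Fin n) ℂ := Matrix.diagonal (fun i => ((d i : ℝ) : ℂ)⁻¹) with hDc'
  have hdcne : ∀ i : Fin n, ((d i : ℝ) : ℂ) ≠ 0 := fun i =>
    Complex.ofReal_ne_zero.mpr (hdne i)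
  have hDmap : (Matrix.diagonal d).map (fun x : ℝ => (x : ℂ)) = Dc := by
    rw [hfc, Matrix.diagonal_map (map_zero f)]
    rfl
  have hSmap : ((u : ℝ) • S).map (fun x : ℝ => (x : ℂ)) = (u : ℂ) • Sc := by
    ext i j
    simp only [Matrix.map_apply, Matrix.smul_apply, smul_eq_mul, hScdef]
    push_cast
    ring
  have hkeyC : Bc * Dc = Dc * ((u : ℂ) • Sc) := by
    have h := congrArg (fun M : Matrix (Fin n) (Fin n) ℝ => M.map (fun x : ℝ => (x : ℂ))) key
    rw [hfc] at h
    rw [Matrix.map_mul, Matrix.map_mul] at h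
    rw [← hfc] at h
    rw [hDmap, hSmap] at h
    exact h
  have hprod : Dc * Dc' = 1 := by
    rw [hDc, hDc', Matrix.diagonal_mul_diagonal]
    convert Matrix.diagonal_one with i
    exact mul_inv_cancel₀ (hdcne i)
  have hprod' : Dc' * Dc = 1 := by
    rw [hDc, hDc', Matrix.diagonal_mul_diagonal]
    convert Matrix.diagonal_one with i
    exact inv_mul_cancel₀ (hdcne i)
  set U : (Matrix (Fin n) (Fin n) ℂ)ˣ := ⟨Dc, Dc', hprod, hprod'⟩ with hU
  have hUval : (↑U : Matrix (Fin n) (Fin n) ℂ) = Dc := rfl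
  have hconj : Bc = (↑U : Matrix (Fin n) (Fin n) ℂ) * ((u : ℂ) • Sc)
      * (↑U⁻¹ : Matrix (Fin n) (Fin n) ℂ) := by
    have h1 : (↑U : Matrix (Fin n) (Fin n) ℂ) * ((u : ℂ) • Sc)
        = Bc * (↑U : Matrix (Fin n) (Fin n) ℂ) := by rw [hUval]; exact hkeyC.symm
    calc Bc = Bc * ((↑U : Matrix (Fin n) (Fin n) ℂ) * ↑U⁻¹) := by
              rw [U.mul_inv, mul_one]
    _ = (Bc * ↑U) * ↑U⁻¹ := by rw [mul_assoc]
    _ = ((↑U : Matrix (Fin n) (Fin n) ℂ) * ((u : ℂ) • Sc)) * ↑U⁻¹ := by rw [← h1]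
  have hσ : spectrum ℂ Bc = spectrum ℂ ((u : ℂ) • Sc) := by
    rw [hconj, spectrum.units_conjugate]
  have hrad : spectralRadius ℂ Bc = spectralRadius ℂ ((u : ℂ) • Sc) := by
    unfold spectralRadius
    rw [hσ]
  have hspec : specRad B = specRad ((u : ℝ) • S) := by
    unfold specRad
    rw [← hBc, hSmap, hrad]
  rw [hspec, specRad_smul u (by positivity) S, hu, hst, hs1,
    ← Real.sqrt_mul ht0.le]

end Levinger

/-- Levinger's function of a nonnegative weighted shift matrix (nonzero entries
only on the superdiagonal) with at least one positive weight is strictly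
concave on `(0,1)`. -/
theorem levinger_weighted_shift_strictConcave {n : ℕ} (hn : 2 ≤ n)
    (A : Matrix (Fin n) (Fin n) ℝ)
    (hshift : ∀ i j : Fin n, (j:ℕ) ≠ (i:ℕ) + 1 → A i j = 0)
    (hnn : ∀ i j, 0 ≤ A i j)
    (hpos : ∃ i j : Fin n, (j:ℕ) = (i:ℕ) + 1 ∧ 0 < A i j) :
    StrictConcaveOn ℝ (Set.Ioo (0:ℝ) 1)
      (fun t : ℝ => specRad ((1 - t) • A + t • Aᵀ)) := by
  obtain ⟨i0, j0, hij, hApos⟩ := hpos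
  set S := A + Aᵀ with hS
  have hSsymm : Sᵀ = S := by
    rw [hS, Matrix.transpose_add, Matrix.transpose_transpose, add_comm]
  have hSne : S ≠ 0 := by
    intro h
    have hz : S i0 j0 = 0 := by rw [h]; rfl
    have hp : 0 < S i0 j0 := by
      have he : S i0 j0 = A i0 j0 + A j0 i0 := rfl
      rw [he]
      exact add_pos_of_pos_of_nonneg hApos (hnn _ _)
    linarith
  have hC : 0 < specRad S := specRad_pos_of_symm S hSsymm hSne
  set C := specRad S with hCdef
  have hEq : ∀ x ∈ Set.Ioo (0:ℝ) 1,
      specRad ((1 - x) • A + x • Aᵀ) = Real.sqrt (x * (1 - x)) * C :=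
    fun x hx => specRad_levinger_eq A hshift hx
  refine ⟨convex_Ioo 0 1, ?_⟩
  intro x hx y hy hxy a b ha hb hab
  have hmem : a • x + b • y ∈ Set.Ioo (0:ℝ) 1 := (convex_Ioo 0 1) hx hy ha.le hb.le hab
  simp only [smul_eq_mul] at hmem ⊢
  rw [hEq x hx, hEq y hy, hEq _ hmem]
  obtain ⟨hx0, hx1⟩ := hx
  obtain ⟨hy0, hy1⟩ := hy
  obtain ⟨hp0, hp1⟩ := hmem
  set sx := Real.sqrt (x * (1 - x)) with hsx
  set sy := Real.sqrt (y * (1 - y)) with hsy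
  have hxg : 0 ≤ x * (1 - x) := by nlinarith
  have hyg : 0 ≤ y * (1 - y) := by nlinarith
  have hsx2 : sx ^ 2 = x * (1 - x) := Real.sq_sqrt hxg
  have hsy2 : sy ^ 2 = y * (1 - y) := Real.sq_sqrt hyg
  have hsx0 : 0 ≤ sx := Real.sqrt_nonneg _
  have hsy0 : 0 ≤ sy := Real.sqrt_nonneg _
  have hdiff : 0 < (x - y) ^ 2 := by
    have hne : x - y ≠ 0 := sub_ne_zero.mpr hxy
    exact sq_pos_iff.mpr hne
  have key : a * sx + b * sy
      < Real.sqrt ((a * x + b * y) * (1 - (a * x + b * y))) := by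
    refine (Real.lt_sqrt (by positivity)).mpr ?_
    have hkey2 : (a * x + b * y) * (1 - (a * x + b * y)) - (a * sx + b * sy) ^ 2
        = a * b * ((sx - sy) ^ 2 + (x - y) ^ 2) := by
      have hb1 : b = 1 - a := by linarith
      subst hb1
      linear_combination (-a) * hsx2 + (a - 1) * hsy2
    nlinarith [hkey2, mul_pos (mul_pos ha hb) hdiff,
      mul_nonneg (mul_pos ha hb).le (sq_nonneg (sx - sy))]
  nlinarith [mul_lt_mul_of_pos_right key hC]
end

section
/- Let n ≥ 2 and let A ∈ ℝ^{n×n} be a nonnegative weighted shift matrix: A_{i,i+1} = c_i ≥ 0 for i = 1,…,n−1 and all other entries 0. Then for all t ∈ [0,1], ρ((1−t)A + tAᵀ) = 2√(t(1−t)) · ρ((A + Aᵀ)/2). -/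
open Matrix

open Polynomial in
private lemma shift_pow_eq_zero {n : ℕ} (A : Matrix (Fin n) (Fin n) ℝ)
    (hshift : ∀ i j : Fin n, (j:ℕ) ≠ (i:ℕ) + 1 → A i j = 0) : A ^ n = 0 := by
  have hA : A.BlockTriangular id := by
    intro i j h
    simp only [id_eq] at h
    exact hshift i j (by have := Fin.lt_def.mp h; omega)
  have hc : A.charpoly = X ^ n := by
    rw [Matrix.charpoly_of_upperTriangular A hA]
    have hz : ∀ i : Fin n, A i i = 0 := fun i => hshift i i (by omega)
    simp [hz, Finset.prod_const, Finset.card_univ]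
  have h := A.aeval_self_charpoly
  rwa [hc, map_pow, aeval_X] at h

private lemma spectralRadius_eq_zero_of_pow {A : Type*} [Ring A] [Algebra ℂ A] [Nontrivial A]
    {a : A} {k : ℕ} (hk : k ≠ 0) (h : a ^ k = 0) : spectralRadius ℂ a = 0 := by
  refine le_antisymm ?_ zero_le
  rw [spectralRadius]
  refine iSup₂_le fun x hx => ?_
  have hx' : x ^ k ∈ spectrum ℂ (a ^ k) := spectrum.pow_image_subset a k ⟨x, hx, rfl⟩
  rw [h, spectrum.zero_eq] at hx'
  have hx0 : x = 0 := pow_eq_zero_iff hk |>.mp (by simpa using hx')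
  simp [hx0]

private lemma spectralRadius_units_conj {A : Type*} [Ring A] [Algebra ℂ A] (u : Aˣ) (a : A) :
    spectralRadius ℂ ((u : A) * a * ↑u⁻¹) = spectralRadius ℂ a := by
  rw [spectralRadius, spectralRadius, spectrum.units_conjugate]

private lemma spectralRadius_units_smul {A : Type*} [Ring A] [Algebra ℂ A]
    (c : ℂˣ) (a : A) :
    spectralRadius ℂ ((c : ℂ) • a) = ‖(c : ℂ)‖₊ * spectralRadius ℂ a := by
  rw [spectralRadius, spectralRadius, ← Units.smul_def, spectrum.unit_smul_eq_smul,
    ← Set.image_smul, iSup_image]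
  simp_rw [Units.smul_def, smul_eq_mul, nnnorm_mul, ENNReal.coe_mul, ← ENNReal.mul_iSup]

private lemma levinger_entry1 {s s' D a t : ℝ} (hs : s ≠ 0) (hs' : s' ≠ 0) (hD : D ≠ 0)
    (hss' : s' * s' = 1 - t) :
    (1 - t) * a + t * 0 = D * (2 * (s * s') * (1 / 2 * (a + 0))) * (D * (s / s'))⁻¹ := by
  field_simp
  linear_combination (-a) * hss'

private lemma levinger_entry2 {s s' D a t : ℝ} (hs : s ≠ 0) (hs' : s' ≠ 0) (hD : D ≠ 0)
    (hss : s * s = t) :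
    (1 - t) * 0 + t * a = D * (s / s') * (2 * (s * s') * (1 / 2 * (0 + a))) * D⁻¹ := by
  field_simp
  linear_combination (-a) * hss

/-- For a nonnegative weighted shift matrix `A` (nonzero entries only on the
superdiagonal), the spectral radius of the Levinger homotopy satisfies
`ρ((1−t)A + tAᵀ) = 2√(t(1−t)) · ρ((A + Aᵀ)/2)` for all `t ∈ [0,1]`. -/
theorem specRad_levinger_weighted_shift {n : ℕ} (hn : 2 ≤ n)
    (A : Matrix (Fin n) (Fin n) ℝ)
    (hshift : ∀ i j : Fin n, (j:ℕ) ≠ (i:ℕ) + 1 → A i j = 0)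
    (hnn : ∀ i j, 0 ≤ A i j) :
    ∀ t ∈ Set.Icc (0:ℝ) 1,
      specRad ((1 - t) • A + t • Aᵀ) =
        2 * Real.sqrt (t * (1 - t)) * specRad ((1/2 : ℝ) • (A + Aᵀ)) := by
  have hn0 : n ≠ 0 := by omega
  haveI : Nonempty (Fin n) := Fin.pos_iff_nonempty.mp (by omega)
  have hAn : A ^ n = 0 := shift_pow_eq_zero A hshift
  have mapC : ∀ (B : Matrix (Fin n) (Fin n) ℝ) (k : ℕ),
      (B.map (fun x : ℝ => (x : ℂ))) ^ k = (B ^ k).map (fun x : ℝ => (x : ℂ)) := by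
    intro B k
    have h1 : (B.map (fun x : ℝ => (x : ℂ))) = (Complex.ofRealHom.mapMatrix B) := rfl
    rw [h1, ← map_pow]
    rfl
  intro t ht
  obtain ⟨ht0, ht1⟩ := ht
  have hrad0 : ∀ B : Matrix (Fin n) (Fin n) ℝ, B ^ n = 0 → specRad B = 0 := by
    intro B hB
    rw [specRad, spectralRadius_eq_zero_of_pow hn0 (by rw [mapC, hB]; ext i j; simp)]
    simp
  rcases eq_or_lt_of_le ht0 with h0 | h0
  · -- t = 0
    rw [← h0]
    simp only [sub_zero, one_smul, zero_smul, add_zero, zero_mul, Real.sqrt_zero, mul_zero,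
      zero_mul]
    exact hrad0 A hAn
  rcases eq_or_lt_of_le ht1 with h1 | h1
  · -- t = 1
    rw [h1]
    simp only [sub_self, zero_smul, one_smul, zero_add, mul_zero, Real.sqrt_zero, zero_mul]
    refine hrad0 Aᵀ ?_
    rw [← Matrix.transpose_pow, hAn, Matrix.transpose_zero]
  · -- 0 < t < 1
    have ht1' : 0 < 1 - t := by linarith
    set s := Real.sqrt t with hs_def
    set s' := Real.sqrt (1 - t) with hs'_def
    have hs : 0 < s := Real.sqrt_pos.mpr h0
    have hs' : 0 < s' := Real.sqrt_pos.mpr ht1'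
    have hss : s * s = t := Real.mul_self_sqrt ht0
    have hss' : s' * s' = 1 - t := Real.mul_self_sqrt ht1'.le
    have hr : Real.sqrt (t * (1 - t)) = s * s' := Real.sqrt_mul ht0 _
    set d : Fin n → ℝ := fun k => (s / s') ^ (k : ℕ) with hd_def
    have hd : ∀ k, d k ≠ 0 := fun k => pow_ne_zero _ (div_ne_zero hs.ne' hs'.ne')
    set c : ℝ := 2 * Real.sqrt (t * (1 - t)) with hc_def
    have hcpos : 0 < c := by rw [hc_def, hr]; positivity
    have key : (1 - t) • A + t • Aᵀ
        = diagonal d * (c • ((1/2 : ℝ) • (A + Aᵀ))) * diagonal (fun k => (d k)⁻¹) := by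
      ext i j
      rw [Matrix.mul_diagonal, Matrix.diagonal_mul]
      simp only [Matrix.smul_apply, Matrix.add_apply, Matrix.transpose_apply, smul_eq_mul]
      by_cases hij : (j:ℕ) = (i:ℕ) + 1
      · have hji : A j i = 0 := hshift j i (by omega)
        have hdj : d j = d i * (s / s') := by
          simp only [hd_def, hij, pow_succ]
        rw [hji, hdj, hc_def, hr]
        exact levinger_entry1 hs.ne' hs'.ne' (hd i) hss'
      · by_cases hji : (i:ℕ) = (j:ℕ) + 1
        · have hij0 : A i j = 0 := hshift i j (by omega)
          have hdi : d i = d j * (s / s') := by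
            simp only [hd_def, hji, pow_succ]
          rw [hij0, hdi, hc_def, hr]
          exact levinger_entry2 hs.ne' hs'.ne' (hd j) hss
        · rw [hshift i j hij, hshift j i hji]
          ring
    -- move to ℂ
    have hfun : (fun x : ℝ => (x:ℂ)) = ⇑Complex.ofRealHom := rfl
    set Mc := (((1/2 : ℝ)) • (A + Aᵀ)).map (fun x : ℝ => (x : ℂ)) with hMc_def
    set dc : Fin n → ℂ := fun k => ((d k : ℝ) : ℂ) with hdc_def
    have hdc : ∀ k, dc k ≠ 0 := fun k => by
      simp only [hdc_def, ne_eq, Complex.ofReal_eq_zero]; exact hd k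
    have mapsmul : ∀ (r : ℝ) (X : Matrix (Fin n) (Fin n) ℝ),
        (r • X).map (fun x : ℝ => (x:ℂ)) = ((r : ℂ)) • X.map (fun x : ℝ => (x:ℂ)) := by
      intro r X
      ext i j
      simp [Matrix.map_apply, Matrix.smul_apply]
    have mapKey : ((1 - t) • A + t • Aᵀ).map (fun x : ℝ => (x:ℂ))
        = diagonal dc * (((c : ℂ)) • Mc) * diagonal (fun k => (dc k)⁻¹) := by
      rw [key, ← mapsmul c, hfun]
      rw [Matrix.map_mul, Matrix.map_mul]
      congr 1
      · congr 1
        · exact Matrix.diagonal_map (by simp)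
      · rw [Matrix.diagonal_map (by simp)]
        congr 1
        ext k
        simp [hdc_def]
    let u : (Matrix (Fin n) (Fin n) ℂ)ˣ :=
      ⟨diagonal dc, diagonal (fun k => (dc k)⁻¹),
        by rw [Matrix.diagonal_mul_diagonal, ← Matrix.diagonal_one];
           exact congrArg Matrix.diagonal (funext fun k => mul_inv_cancel₀ (hdc k)),
        by rw [Matrix.diagonal_mul_diagonal, ← Matrix.diagonal_one];
           exact congrArg Matrix.diagonal (funext fun k => inv_mul_cancel₀ (hdc k))⟩
    have hu : (u : Matrix (Fin n) (Fin n) ℂ) = diagonal dc := rfl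
    have hu' : ((u⁻¹ : (Matrix (Fin n) (Fin n) ℂ)ˣ) : Matrix (Fin n) (Fin n) ℂ)
        = diagonal (fun k => (dc k)⁻¹) := rfl
    have hc0 : ((c : ℝ) : ℂ) ≠ 0 := by exact_mod_cast hcpos.ne'
    set cu : ℂˣ := Units.mk0 ((c:ℝ):ℂ) hc0 with hcu
    have hcuv : ((c:ℝ):ℂ) = (cu : ℂ) := rfl
    rw [specRad, mapKey, ← hu, ← hu', spectralRadius_units_conj, hcuv,
      spectralRadius_units_smul cu Mc, ENNReal.toReal_mul, ENNReal.coe_toReal,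
      specRad]
    rw [← hMc_def]
    congr 1
    rw [← hcuv, coe_nnnorm, Complex.norm_real, Real.norm_eq_abs, abs_of_pos hcpos]
end

section
/- Let n ≥ 2 and let A ∈ ℝ^{n×n} be a nonnegative cyclic weighted shift matrix with weights c₁,…,c_n ≥ 0: A_{i, (i mod n)+1} = c_i for i = 1,…,n and all other entries 0. If at least one weight is zero and at least one weight is positive, then Levinger's function r(t) := ρ((1−t)A + tAᵀ) is strictly concave on t ∈ (0,1). -/
open Matrix
open scoped ENNReal NNReal Pointwise

private lemma radius_ne_top' {n : ℕ} (X : Matrix (Fin n) (Fin n) ℂ) : spectralRadius ℂ X ≠ ⊤ := by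
  have hfin : (spectrum ℂ X).Finite := X.finite_spectrum
  have h : spectralRadius ℂ X ≤ hfin.toFinset.sup (fun k => (‖k‖₊ : ℝ≥0∞)) :=
    iSup₂_le fun k hk => Finset.le_sup (f := fun k => (‖k‖₊ : ℝ≥0∞)) (hfin.mem_toFinset.2 hk)
  refine ne_top_of_le_ne_top ?_ h
  exact (Finset.sup_lt_iff (by simp)).2 (fun k _ => ENNReal.coe_lt_top) |>.ne

private lemma le_radius' {n : ℕ} {X : Matrix (Fin n) (Fin n) ℂ} {k : ℂ} (hk : k ∈ spectrum ℂ X) :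
    (‖k‖₊ : ℝ≥0∞) ≤ spectralRadius ℂ X :=
  le_iSup₂ (f := fun k (_ : k ∈ spectrum ℂ X) => (‖k‖₊ : ℝ≥0∞)) k hk

private lemma radius_coe_smul' {n : ℕ} [NeZero n] (r : ℝ) (hr : r ≠ 0)
    (X : Matrix (Fin n) (Fin n) ℂ) :
    spectralRadius ℂ ((r:ℂ) • X) = (‖r‖₊ : ℝ≥0∞) * spectralRadius ℂ X := by
  have h := spectrum.unit_smul_eq_smul X (Units.mk0 (r:ℂ) (by exact_mod_cast hr))
  have h2 : spectrum ℂ ((r:ℂ) • X) =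
      (Units.mk0 (r:ℂ) (by exact_mod_cast hr)) • spectrum ℂ X := h
  unfold spectralRadius
  rw [h2]
  have h3 : (Units.mk0 (r:ℂ) (by exact_mod_cast hr)) • spectrum ℂ X
      = (fun k => (r:ℂ) * k) '' spectrum ℂ X := by
    ext x; simp [Set.mem_smul_set, Units.smul_def, smul_eq_mul]
  rw [h3, iSup_image]
  simp_rw [nnnorm_mul, ENNReal.coe_mul, Complex.nnnorm_real]
  rw [ENNReal.mul_iSup]
  congr 1
  ext k
  rw [ENNReal.mul_iSup]

private lemma pstep' {n a b : ℕ} (ha : a < n) (hb : b < n) (hab : a ≠ b) :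
    ((a + 1) % n + n - 1 - b) % n = (a + n - 1 - b) % n + 1 := by
  have hq : ∀ x : ℕ, x < n → x + n - 1 - b = x + (n - 1 - b) := by intro x hx; omega
  rw [hq a ha, hq _ (Nat.mod_lt _ (by omega))]
  rw [Nat.mod_add_mod]
  set q := n - 1 - b with hqdef
  rcases Nat.lt_or_ge (a + q) n with h | h
  · have e1 : (a + q) % n = a + q := Nat.mod_eq_of_lt h
    have hne : a + q ≠ n - 1 := by omega
    have e2 : (a + 1 + q) % n = a + 1 + q := Nat.mod_eq_of_lt (by omega)
    omega
  · have hlt : a + q - n < n := by omega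
    have e1 : (a + q) % n = a + q - n := by
      rw [Nat.mod_eq_sub_mod h, Nat.mod_eq_of_lt hlt]
    have e2 : (a + 1 + q) % n = a + 1 + q - n := by
      rw [Nat.mod_eq_sub_mod (by omega), Nat.mod_eq_of_lt (by omega)]
    omega

private lemma specRad_pos' {n : ℕ} [NeZero n] (S : Matrix (Fin n) (Fin n) ℝ) (hsym : Sᵀ = S)
    {i j : Fin n} (hij : S i j ≠ 0) :
    0 < (spectralRadius ℂ (S.map (fun x : ℝ => (x : ℂ)))).toReal := by
  set X := S.map (fun x : ℝ => (x:ℂ)) with hXdef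
  have hherm : X.IsHermitian := by
    ext a b
    have hba : S b a = S a b := congrFun (congrFun hsym a) b
    simp [X, Matrix.conjTranspose_apply, Matrix.map_apply, Complex.conj_ofReal, hba]
  have hXne : X ≠ 0 := by
    intro h
    apply hij
    have := congrFun (congrFun h i) j
    simpa [X, Matrix.map_apply] using this
  have hex : ∃ k, hherm.eigenvalues k ≠ 0 := by
    by_contra hall
    push_neg at hall
    apply hXne
    have hdiag : diagonal (RCLike.ofReal ∘ hherm.eigenvalues) = (0 : Matrix (Fin n) (Fin n) ℂ) := by
      ext a b
      rcases eq_or_ne a b with rfl | hab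
      · simp [diagonal, hall a]
      · simp [diagonal, hab]
    rw [hherm.spectral_theorem, hdiag]
    simp
  obtain ⟨k, hk⟩ := hex
  have hmem : ((hherm.eigenvalues k : ℝ) : ℂ) ∈ spectrum ℂ X := by
    have h := hherm.eigenvalues_mem_spectrum_real k
    have := spectrum.algebraMap_mem ℂ h
    simpa using this
  have hle := le_radius' hmem
  have hne : spectralRadius ℂ X ≠ 0 := by
    intro h0
    rw [h0, nonpos_iff_eq_zero] at hle
    apply hk
    have : ‖((hherm.eigenvalues k : ℝ) : ℂ)‖₊ = 0 := by exact_mod_cast hle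
    simpa using this
  exact ENNReal.toReal_pos hne (radius_ne_top' _)

private lemma levinger_eq' {n : ℕ} (hn : 2 ≤ n) (c : Fin n → ℝ)
    (A : Matrix (Fin n) (Fin n) ℝ)
    (hA : ∀ i j : Fin n, A i j = if (j:ℕ) = ((i:ℕ) + 1) % n then c i else 0)
    {z : Fin n} (hz : c z = 0) {t : ℝ} (ht0 : 0 < t) (ht1 : t < 1) :
    specRad ((1 - t) • A + t • Aᵀ) = Real.sqrt (t * (1 - t)) * specRad (A + Aᵀ) := by
  haveI : NeZero n := ⟨by omega⟩
  have h1t : 0 < 1 - t := by linarith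
  set r := Real.sqrt (t * (1 - t)) with hrdef
  have hrpos : 0 < r := Real.sqrt_pos.2 (by positivity)
  set u := Real.sqrt (t / (1 - t)) with hudef
  have hupos : 0 < u := Real.sqrt_pos.2 (by positivity)
  have hur : u * r = t := by
    rw [hudef, hrdef, ← Real.sqrt_mul (by positivity)]
    rw [show t / (1 - t) * (t * (1 - t)) = t ^ 2 by field_simp]
    exact Real.sqrt_sq ht0.le
  have hu1t : u * (1 - t) = r := by
    rw [hudef, hrdef]
    conv_lhs => rw [show (1:ℝ) - t = Real.sqrt ((1 - t) ^ 2) from (Real.sqrt_sq h1t.le).symm]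
    rw [← Real.sqrt_mul (by positivity)]
    congr 1
    field_simp
    rw [Real.sqrt_sq h1t.le]
  set p : Fin n → ℕ := fun i => ((i:ℕ) + n - 1 - (z:ℕ)) % n with hpdef
  set d : Fin n → ℝ := fun i => u ^ p i with hddef
  have hd : ∀ i, d i ≠ 0 := fun i => pow_ne_zero _ hupos.ne'
  have hdc : ∀ i, ((d i : ℝ) : ℂ) ≠ 0 := fun i => by exact_mod_cast hd i
  -- the unit
  let U : (Matrix (Fin n) (Fin n) ℂ)ˣ :=
    { val := diagonal (fun i => ((d i : ℝ) : ℂ))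
      inv := diagonal (fun i => (((d i : ℝ) : ℂ))⁻¹)
      val_inv := by
        rw [diagonal_mul_diagonal,
          show (fun i => ((d i : ℝ) : ℂ) * (((d i : ℝ) : ℂ))⁻¹) = fun _ => (1:ℂ) from
            funext fun i => mul_inv_cancel₀ (hdc i), diagonal_one]
      inv_val := by
        rw [diagonal_mul_diagonal,
          show (fun i => (((d i : ℝ) : ℂ))⁻¹ * ((d i : ℝ) : ℂ)) = fun _ => (1:ℂ) from
            funext fun i => inv_mul_cancel₀ (hdc i), diagonal_one] }
  set X : Matrix (Fin n) (Fin n) ℂ := (A + Aᵀ).map (fun x : ℝ => (x:ℂ)) with hXdef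
  -- step lemma for p
  have hpstep : ∀ i j : Fin n, (j:ℕ) = ((i:ℕ) + 1) % n → i ≠ z → p j = p i + 1 := by
    intro i j hij hiz
    have := pstep' (n := n) (a := (i:ℕ)) (b := (z:ℕ)) i.isLt z.isLt
      (fun h => hiz (Fin.ext h))
    simp only [hpdef, hij]
    exact this
  -- entrywise terms
  have term1 : ∀ i j : Fin n, (j:ℕ) = ((i:ℕ) + 1) % n →
      ((d i : ℝ) : ℂ) * ((r:ℂ) * (c i : ℂ)) * (((d j : ℝ) : ℂ))⁻¹ = (1 - (t:ℂ)) * (c i : ℂ) := by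
    intro i j hij
    by_cases hci : c i = 0
    · simp [hci]
    · have hiz : i ≠ z := fun h => hci (h ▸ hz)
      have hpj : p j = p i + 1 := hpstep i j hij hiz
      have hreal : d i * (r * c i) * (d j)⁻¹ = (1 - t) * c i := by
        simp only [hddef, hpj, pow_succ]
        field_simp
        linear_combination (-1 : ℝ) * hu1t
      calc ((d i : ℝ) : ℂ) * ((r:ℂ) * (c i : ℂ)) * (((d j : ℝ) : ℂ))⁻¹
          = ((d i * (r * c i) * (d j)⁻¹ : ℝ) : ℂ) := by push_cast; ring
        _ = (((1 - t) * c i : ℝ) : ℂ) := by rw [hreal]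
        _ = (1 - (t:ℂ)) * (c i : ℂ) := by push_cast; ring
  have term2 : ∀ i j : Fin n, (i:ℕ) = ((j:ℕ) + 1) % n →
      ((d i : ℝ) : ℂ) * ((r:ℂ) * (c j : ℂ)) * (((d j : ℝ) : ℂ))⁻¹ = (t:ℂ) * (c j : ℂ) := by
    intro i j hij
    by_cases hcj : c j = 0
    · simp [hcj]
    · have hjz : j ≠ z := fun h => hcj (h ▸ hz)
      have hpi : p i = p j + 1 := hpstep j i hij hjz
      have hreal : d i * (r * c j) * (d j)⁻¹ = t * c j := by
        simp only [hddef, hpi, pow_succ]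
        field_simp
        linear_combination hur
      calc ((d i : ℝ) : ℂ) * ((r:ℂ) * (c j : ℂ)) * (((d j : ℝ) : ℂ))⁻¹
          = ((d i * (r * c j) * (d j)⁻¹ : ℝ) : ℂ) := by push_cast; ring
        _ = ((t * c j : ℝ) : ℂ) := by rw [hreal]
        _ = (t:ℂ) * (c j : ℂ) := by push_cast; ring
  -- the conjugation identity
  have key : (U : Matrix (Fin n) (Fin n) ℂ) * ((r:ℂ) • X) * (↑U⁻¹ : Matrix (Fin n) (Fin n) ℂ)
      = ((1 - t) • A + t • Aᵀ).map (fun x : ℝ => (x:ℂ)) := by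
    have hUval : (U : Matrix (Fin n) (Fin n) ℂ) = diagonal (fun i => ((d i : ℝ) : ℂ)) := rfl
    have hUinv : (↑U⁻¹ : Matrix (Fin n) (Fin n) ℂ) = diagonal (fun i => (((d i : ℝ) : ℂ))⁻¹) := rfl
    rw [hUval, hUinv]
    ext i j
    simp only [Matrix.diagonal_mul, Matrix.mul_diagonal, Matrix.map_apply,
      Matrix.add_apply, Matrix.transpose_apply, Matrix.smul_apply, smul_eq_mul, hXdef]
    rw [hA i j, hA j i]
    push_cast [apply_ite (fun x : ℝ => (x : ℂ))]
    split_ifs with h1 h2 h2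
    · linear_combination term1 i j h1 + term2 i j h2
    · linear_combination term1 i j h1
    · linear_combination term2 i j h2
    · ring
  -- conclude
  unfold specRad
  rw [← key]
  unfold spectralRadius
  rw [spectrum.units_conjugate]
  have : (⨆ k ∈ spectrum ℂ ((r:ℂ) • X), (‖k‖₊ : ℝ≥0∞)) = spectralRadius ℂ ((r:ℂ) • X) := rfl
  rw [this, radius_coe_smul' r hrpos.ne' X, ENNReal.toReal_mul]
  congr 1
  · simp [Real.norm_of_nonneg hrpos.le]

/-- If a nonnegative cyclic weighted shift matrix has at least one zero weight
and at least one positive weight, then its Levinger function is strictly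
concave on `(0,1)`.  (Indices are 0-based: entry `(i, (i+1) mod n)` carries
weight `c i`.) -/
theorem levinger_cyclic_shift_zero_weight_strictConcave {n : ℕ} (hn : 2 ≤ n)
    (c : Fin n → ℝ) (hc : ∀ i, 0 ≤ c i)
    (A : Matrix (Fin n) (Fin n) ℝ)
    (hA : ∀ i j : Fin n, A i j = if (j:ℕ) = ((i:ℕ) + 1) % n then c i else 0)
    (hzero : ∃ i, c i = 0) (hpos : ∃ i, 0 < c i) :
    StrictConcaveOn ℝ (Set.Ioo (0:ℝ) 1)
      (fun t : ℝ => specRad ((1 - t) • A + t • Aᵀ)) := by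
  haveI : NeZero n := ⟨by omega⟩
  obtain ⟨z, hz⟩ := hzero
  obtain ⟨j, hj⟩ := hpos
  set K := specRad (A + Aᵀ) with hKdef
  have hsym : (A + Aᵀ)ᵀ = A + Aᵀ := by rw [transpose_add, transpose_transpose, add_comm]
  have hjlt : ((j:ℕ) + 1) % n < n := Nat.mod_lt _ (by omega)
  set j1 : Fin n := ⟨((j:ℕ) + 1) % n, hjlt⟩ with hj1def
  have hentry : (A + Aᵀ) j j1 ≠ 0 := by
    have h1 : A j j1 = c j := by rw [hA]; simp [hj1def]
    have h2 : 0 ≤ Aᵀ j j1 := by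
      rw [Matrix.transpose_apply, hA]
      split_ifs
      exacts [hc _, le_refl 0]
    have h3 : 0 < (A + Aᵀ) j j1 := by rw [Matrix.add_apply, h1]; linarith
    exact h3.ne'
  have hK : 0 < K := specRad_pos' (A + Aᵀ) hsym hentry
  have heq : ∀ s : ℝ, s ∈ Set.Ioo (0:ℝ) 1 →
      specRad ((1 - s) • A + s • Aᵀ) = Real.sqrt (s * (1 - s)) * K :=
    fun s hs => levinger_eq' hn c A hA hz hs.1 hs.2
  constructor
  · exact convex_Ioo 0 1
  · intro x hx y hy hxy a b ha hb hab
    have hmem : a • x + b • y ∈ Set.Ioo (0:ℝ) 1 := (convex_Ioo (0:ℝ) 1) hx hy ha.le hb.le hab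
    have hmem' : a * x + b * y ∈ Set.Ioo (0:ℝ) 1 := by simpa [smul_eq_mul] using hmem
    simp only [smul_eq_mul]
    rw [heq x hx, heq y hy, heq _ hmem']
    have hgx : 0 < x * (1 - x) := by obtain ⟨h1, h2⟩ := hx; nlinarith
    have hgy : 0 < y * (1 - y) := by obtain ⟨h1, h2⟩ := hy; nlinarith
    have hkey : (a*x+b*y) * (1 - (a*x+b*y)) - (a * (x*(1-x)) + b * (y*(1-y)))
        = a*b*(x-y)^2 := by
      have hb' : b = 1 - a := by linarith
      rw [hb']; ring
    have hsq : 0 < (x - y)^2 := by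
      have h := sub_ne_zero.2 hxy
      positivity
    have hprod : 0 < a*b*(x-y)^2 := mul_pos (mul_pos ha hb) hsq
    have hcc : a * Real.sqrt (x*(1-x)) + b * Real.sqrt (y*(1-y))
        ≤ Real.sqrt (a*(x*(1-x)) + b*(y*(1-y))) := by
      have h := Real.strictConcaveOn_sqrt.concaveOn.2 (Set.mem_Ici.2 hgx.le)
        (Set.mem_Ici.2 hgy.le) ha.le hb.le hab
      simpa [smul_eq_mul] using h
    have hlt : Real.sqrt (a*(x*(1-x)) + b*(y*(1-y)))
        < Real.sqrt ((a*x+b*y)*(1-(a*x+b*y))) := by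
      apply Real.sqrt_lt_sqrt (by positivity)
      nlinarith [hprod, hkey]
    have hcomb := lt_of_le_of_lt hcc hlt
    calc a * (Real.sqrt (x*(1-x)) * K) + b * (Real.sqrt (y*(1-y)) * K)
        = (a * Real.sqrt (x*(1-x)) + b * Real.sqrt (y*(1-y))) * K := by ring
      _ < Real.sqrt ((a*x+b*y)*(1-(a*x+b*y))) * K := mul_lt_mul_of_pos_right hcomb hK
end

section
/- Let A ∈ ℝ^{n×n} be irreducible and nonnegative. Then t ↦ ρ((1−t)A + tAᵀ) is constant on [0,1] if and only if the Perron vector x of A + Aᵀ (the positive eigenvector corresponding to the spectral radius of A + Aᵀ) satisfies (A − Aᵀ)x = 0, i.e., x lies in the null space of A − Aᵀ. -/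
open Matrix

section LevingerAux

variable {m : Type*} [Fintype m] [DecidableEq m]

lemma matrix_mem_spectrum_iff {K : Type*} [Field K]
    (N : Matrix m m K) (μ : K) :
    μ ∈ spectrum K N ↔ ∃ v, v ≠ 0 ∧ N *ᵥ v = μ • v := by
  have key : ∀ v, (algebraMap K (Matrix m m K) μ - N) *ᵥ v = μ • v - N *ᵥ v := by
    intro v
    rw [Matrix.sub_mulVec]
    congr 1
    rw [Algebra.algebraMap_eq_smul_one, Matrix.smul_mulVec, Matrix.one_mulVec]
  rw [spectrum.mem_iff, Matrix.isUnit_iff_isUnit_det, isUnit_iff_ne_zero, not_not,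
    ← Matrix.exists_mulVec_eq_zero_iff]
  simp_rw [key, sub_eq_zero]
  exact ⟨fun ⟨v, hv, h⟩ => ⟨v, hv, h.symm⟩, fun ⟨v, hv, h⟩ => ⟨v, hv, h.symm⟩⟩

omit [DecidableEq m] in
lemma map_mulVec_ofReal (M : Matrix m m ℝ) (w : m → ℝ) :
    (M.map (fun x : ℝ => (x : ℂ))) *ᵥ (fun i => (w i : ℂ)) = fun i => ((M *ᵥ w) i : ℂ) := by
  funext i
  simp [Matrix.mulVec, dotProduct, Matrix.map_apply]

lemma spec_bound (B : Matrix m m ℝ) (hB : ∀ i j, 0 ≤ B i j)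
    (x : m → ℝ) (hx : ∀ i, 0 < x i) (lam : ℝ) (h : B *ᵥ x = lam • x)
    (μ : ℂ) (hμ : μ ∈ spectrum ℂ (B.map (fun x : ℝ => (x : ℂ)))) : ‖μ‖ ≤ lam := by
  obtain ⟨v, hv, hveq⟩ := (matrix_mem_spectrum_iff _ μ).mp hμ
  have : Nonempty m := by
    by_contra hne
    exact hv (funext fun i => absurd ⟨i⟩ hne)
  obtain ⟨i, -, hi⟩ := Finset.exists_max_image Finset.univ (fun j => ‖v j‖ / x j)
    ⟨Classical.arbitrary m, Finset.mem_univ _⟩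
  set c : ℝ := ‖v i‖ / x i with hc
  have hcle : ∀ j, ‖v j‖ ≤ c * x j := by
    intro j
    have hthis := hi j (Finset.mem_univ j)
    rw [div_le_div_iff₀ (hx j) (hx i)] at hthis
    rw [hc, div_mul_eq_mul_div, le_div_iff₀ (hx i)]
    linarith
  have hcpos : 0 < c := by
    obtain ⟨j, hj⟩ : ∃ j, v j ≠ 0 := by
      by_contra hno
      push_neg at hno
      exact hv (funext hno)
    have h1 : 0 < ‖v j‖ / x j := div_pos (norm_pos_iff.mpr hj) (hx j)
    exact lt_of_lt_of_le h1 (hi j (Finset.mem_univ j))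
  have hvinorm : ‖v i‖ = c * x i := by rw [hc, div_mul_cancel₀ _ (hx i).ne']
  have key : ‖μ‖ * (c * x i) ≤ lam * (c * x i) := by
    have h1 : ‖μ‖ * ‖v i‖ = ‖((B.map (fun x : ℝ => (x : ℂ))) *ᵥ v) i‖ := by
      rw [hveq]; simp [norm_smul]
    have h2 : ‖((B.map (fun x : ℝ => (x : ℂ))) *ᵥ v) i‖ ≤ ∑ j, B i j * ‖v j‖ := by
      refine (norm_sum_le _ _).trans ?_
      apply Finset.sum_le_sum
      intro j _
      simp only [Matrix.map_apply, norm_mul, Complex.norm_real, Real.norm_eq_abs,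
        abs_of_nonneg (hB i j), le_refl]
    have h3 : ∑ j, B i j * ‖v j‖ ≤ ∑ j, B i j * (c * x j) :=
      Finset.sum_le_sum fun j _ => mul_le_mul_of_nonneg_left (hcle j) (hB i j)
    have h4 : ∑ j, B i j * (c * x j) = c * (B *ᵥ x) i := by
      rw [Matrix.mulVec, dotProduct, Finset.mul_sum]
      exact Finset.sum_congr rfl fun j _ => by ring
    have h5 : (B *ᵥ x) i = lam * x i := by rw [h]; simp
    calc ‖μ‖ * (c * x i) = ‖μ‖ * ‖v i‖ := by rw [hvinorm]
    _ ≤ c * (lam * x i) := by rw [h1]; exact (h2.trans h3).trans_eq (by rw [h4, h5])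
    _ = lam * (c * x i) := by ring
  exact le_of_mul_le_mul_right (by simpa [mul_comm] using key)
    (mul_pos hcpos (hx i))

lemma specRad_of_posEig [Nonempty m] (B : Matrix m m ℝ) (hB : ∀ i j, 0 ≤ B i j)
    (x : m → ℝ) (hx : ∀ i, 0 < x i) (lam : ℝ) (h : B *ᵥ x = lam • x) :
    specRad B = lam := by
  have hlam0 : 0 ≤ lam := by
    have i := Classical.arbitrary m
    have h5 : (B *ᵥ x) i = lam * x i := by rw [h]; simp
    have hnn : 0 ≤ (B *ᵥ x) i :=
      Finset.sum_nonneg fun j _ => mul_nonneg (hB i j) (hx j).le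
    nlinarith [hx i]
  have hmem : (lam : ℂ) ∈ spectrum ℂ (B.map (fun x : ℝ => (x : ℂ))) := by
    rw [matrix_mem_spectrum_iff]
    refine ⟨fun i => (x i : ℂ), ?_, ?_⟩
    · intro hz
      have := congrFun hz (Classical.arbitrary m)
      simp only [Pi.zero_apply, Complex.ofReal_eq_zero] at this
      exact (hx _).ne' this
    · rw [map_mulVec_ofReal, h]
      funext i
      simp
  have heq : spectralRadius ℂ (B.map (fun x : ℝ => (x : ℂ))) = ENNReal.ofReal lam := by
    apply le_antisymm
    · rw [spectralRadius]
      refine iSup₂_le fun μ hμ => ?_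
      rw [← ENNReal.ofReal_coe_nnreal, coe_nnnorm]
      exact ENNReal.ofReal_le_ofReal (spec_bound B hB x hx lam h μ hμ)
    · have h6 : ENNReal.ofReal lam = ↑‖(lam : ℂ)‖₊ := by
        rw [← ENNReal.ofReal_coe_nnreal, coe_nnnorm, Complex.norm_real, Real.norm_eq_abs,
          abs_of_nonneg hlam0]
      rw [h6, spectralRadius]
      exact le_iSup₂ (α := ENNReal) (lam : ℂ) hmem
  rw [specRad, heq, ENNReal.toReal_ofReal hlam0]

lemma pow_entry_nonneg (M : Matrix m m ℝ) (hM : ∀ i j, 0 ≤ M i j) :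
    ∀ k i j, 0 ≤ (M ^ k) i j := by
  intro k
  induction k with
  | zero => intro i j; rw [pow_zero]; by_cases h : i = j <;> simp [Matrix.one_apply, h]
  | succ k ih =>
    intro i j
    rw [pow_succ, Matrix.mul_apply]
    exact Finset.sum_nonneg fun l _ => mul_nonneg (ih i l) (hM l j)

lemma pow_entry_le (A B : Matrix m m ℝ) (hA : ∀ i j, 0 ≤ A i j)
    (hAB : ∀ i j, A i j ≤ B i j) : ∀ k i j, (A ^ k) i j ≤ (B ^ k) i j := by
  intro k
  induction k with
  | zero => intro i j; simp
  | succ k ih =>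
    intro i j
    rw [pow_succ, pow_succ, Matrix.mul_apply, Matrix.mul_apply]
    refine Finset.sum_le_sum fun l _ => ?_
    exact mul_le_mul (ih i l) (hAB l j) (hA l j) (le_trans (pow_entry_nonneg A hA k i l) (ih i l))

lemma pow_mulVec_eig (S : Matrix m m ℝ) (u : m → ℝ) (r : ℝ) (h : S *ᵥ u = r • u) :
    ∀ k, (S ^ k) *ᵥ u = r ^ k • u := by
  intro k
  induction k with
  | zero => simp
  | succ k ih =>
    rw [pow_succ, ← Matrix.mulVec_mulVec, h, Matrix.mulVec_smul, ih, smul_smul, pow_succ]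
    ring_nf

lemma perron_pos (S : Matrix m m ℝ) (hS : ∀ i j, 0 ≤ S i j) (hirr : Irred S)
    (u : m → ℝ) (hu : ∀ i, 0 ≤ u i) (hune : u ≠ 0) (r : ℝ) (heig : S *ᵥ u = r • u) :
    ∀ i, 0 < u i := by
  obtain ⟨j, hj⟩ : ∃ j, 0 < u j := by
    by_contra hno
    push_neg at hno
    exact hune (funext fun i => le_antisymm (hno i) (hu i))
  intro i
  obtain ⟨k, hk⟩ := hirr i j
  have h1 : (S ^ (k + 1)) *ᵥ u = r ^ (k + 1) • u := pow_mulVec_eig S u r heig (k + 1)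
  have h2 : 0 < ((S ^ (k + 1)) *ᵥ u) i := by
    rw [Matrix.mulVec, dotProduct]
    have hterm : ∀ l ∈ Finset.univ, 0 ≤ (S ^ (k + 1)) i l * u l :=
      fun l _ => mul_nonneg (pow_entry_nonneg S hS _ i l) (hu l)
    refine lt_of_lt_of_le (mul_pos hk hj) ?_
    exact Finset.single_le_sum hterm (Finset.mem_univ j)
  rw [h1] at h2
  simp only [Pi.smul_apply, smul_eq_mul] at h2
  rcases (hu i).lt_or_eq with h | h
  · exact h
  · rw [← h, mul_zero] at h2; exact absurd h2 (lt_irrefl 0)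

lemma perron_unique [Nonempty m] (S : Matrix m m ℝ) (hS : ∀ i j, 0 ≤ S i j) (hirr : Irred S)
    (x : m → ℝ) (hx : ∀ i, 0 < x i) (r : ℝ) (hSx : S *ᵥ x = r • x)
    (u : m → ℝ) (hu : ∀ i, 0 < u i) (hSu : S *ᵥ u = r • u) :
    ∃ c : ℝ, 0 < c ∧ u = c • x := by
  obtain ⟨i₀, -, hi₀⟩ := Finset.exists_min_image Finset.univ (fun j => u j / x j)
    ⟨Classical.arbitrary m, Finset.mem_univ _⟩
  set c : ℝ := u i₀ / x i₀ with hc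
  have hcpos : 0 < c := div_pos (hu i₀) (hx i₀)
  refine ⟨c, hcpos, ?_⟩
  set w : m → ℝ := u - c • x with hw
  have hwnn : ∀ i, 0 ≤ w i := by
    intro i
    have h1 := hi₀ i (Finset.mem_univ i)
    rw [hc, div_le_div_iff₀ (hx i₀) (hx i)] at h1
    simp only [hw, Pi.sub_apply, Pi.smul_apply, smul_eq_mul, sub_nonneg, hc]
    rw [div_mul_eq_mul_div, div_le_iff₀ (hx i₀)]
    linarith
  have hwi₀ : w i₀ = 0 := by
    simp only [hw, Pi.sub_apply, Pi.smul_apply, smul_eq_mul, hc]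
    rw [div_mul_cancel₀ _ (hx i₀).ne', sub_self]
  have hSw : S *ᵥ w = r • w := by
    rw [hw, Matrix.mulVec_sub, Matrix.mulVec_smul, hSu, hSx, smul_comm, ← smul_sub]
  by_contra hne
  have hwne : w ≠ 0 := by
    intro h0
    apply hne
    exact sub_eq_zero.mp (show u - c • x = 0 from h0)
  have := perron_pos S hS hirr w hwnn hwne r hSw i₀
  rw [hwi₀] at this
  exact lt_irrefl 0 this

lemma exists_attaining_eig [Nonempty m] (M : Matrix m m ℝ) :
    ∃ (μ : ℂ) (v : m → ℂ), v ≠ 0 ∧ (M.map (fun x : ℝ => (x : ℂ))) *ᵥ v = μ • v ∧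
      ‖μ‖ = specRad M := by
  set N := M.map (fun x : ℝ => (x : ℂ)) with hN
  have hne : (spectrum ℂ N).Nonempty := by
    obtain ⟨μ, hμ⟩ := Module.End.exists_eigenvalue (Matrix.toLin' N)
    obtain ⟨v, hv⟩ := hμ.exists_hasEigenvector
    exact ⟨μ, (matrix_mem_spectrum_iff N μ).mpr
      ⟨v, hv.2, by simpa [Matrix.toLin'_apply] using hv.apply_eq_smul⟩⟩
  have hfin := Matrix.finite_spectrum (R := ℂ) N
  obtain ⟨μ₀, hμ₀mem, hμ₀max⟩ := Finset.exists_max_image hfin.toFinset (fun μ => ‖μ‖)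
    (by rwa [← Set.Finite.toFinset_nonempty hfin] at hne)
  rw [Set.Finite.mem_toFinset] at hμ₀mem
  have hsr : specRad M = ‖μ₀‖ := by
    have heq : spectralRadius ℂ N = ENNReal.ofReal ‖μ₀‖ := by
      apply le_antisymm
      · rw [spectralRadius]
        refine iSup₂_le fun μ hμ => ?_
        rw [← ENNReal.ofReal_coe_nnreal, coe_nnnorm]
        exact ENNReal.ofReal_le_ofReal (hμ₀max μ (hfin.mem_toFinset.mpr hμ))
      · rw [← coe_nnnorm, ENNReal.ofReal_coe_nnreal, spectralRadius]
        exact le_iSup₂ (α := ENNReal) μ₀ hμ₀mem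
    rw [specRad, ← hN, heq, ENNReal.toReal_ofReal (norm_nonneg _)]
  obtain ⟨v, hv, hveq⟩ := (matrix_mem_spectrum_iff N μ₀).mp hμ₀mem
  exact ⟨μ₀, v, hv, hveq, hsr.symm⟩

lemma sym_eig_of_rayleigh [Nonempty m] (S : Matrix m m ℝ) (hsym : Sᵀ = S)
    (hS : ∀ i j, 0 ≤ S i j)
    (x : m → ℝ) (hx : ∀ i, 0 < x i) (r : ℝ) (hSx : S *ᵥ x = r • x)
    (u : m → ℝ) (hru : r * (u ⬝ᵥ u) ≤ u ⬝ᵥ (S *ᵥ u)) : S *ᵥ u = r • u := by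
  set M : Matrix m m ℝ := r • (1 : Matrix m m ℝ) - S with hM
  have hMmul : ∀ w : m → ℝ, M *ᵥ w = r • w - S *ᵥ w := by
    intro w
    rw [hM, Matrix.sub_mulVec, Matrix.smul_mulVec, Matrix.one_mulVec]
  have hherm : M.IsHermitian := by
    rw [Matrix.IsHermitian, Matrix.conjTranspose_eq_transpose_of_trivial, hM,
      Matrix.transpose_sub, Matrix.transpose_smul, Matrix.transpose_one, hsym]
  have hevnn : ∀ i, 0 ≤ hherm.eigenvalues i := by
    intro i
    have hmem := hherm.eigenvalues_mem_spectrum_real i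
    obtain ⟨w, hwne, hweq⟩ := (matrix_mem_spectrum_iff M _).mp hmem
    have hSw : S *ᵥ w = (r - hherm.eigenvalues i) • w := by
      rw [hMmul] at hweq
      funext j
      have := congrFun hweq j
      simp only [Pi.sub_apply, Pi.smul_apply, smul_eq_mul] at this ⊢
      linarith
    have hmemC : ((r - hherm.eigenvalues i : ℝ) : ℂ) ∈
        spectrum ℂ (S.map (fun x : ℝ => (x : ℂ))) := by
      rw [matrix_mem_spectrum_iff]
      refine ⟨fun j => (w j : ℂ), ?_, ?_⟩
      · intro h0
        apply hwne
        funext j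
        have := congrFun h0 j
        simpa using this
      · rw [map_mulVec_ofReal, hSw]
        funext j
        simp
    have hb := spec_bound S hS x hx r hSx _ hmemC
    rw [Complex.norm_real, Real.norm_eq_abs] at hb
    have h2 : r - hherm.eigenvalues i ≤ r := le_trans (le_abs_self _) hb
    linarith
  have hpsd : M.PosSemidef := hherm.posSemidef_iff_eigenvalues_nonneg.mpr hevnn
  have h0 : u ⬝ᵥ (M *ᵥ u) = 0 := by
    have hle : u ⬝ᵥ (M *ᵥ u) ≤ 0 := by
      rw [hMmul, dotProduct_sub, dotProduct_smul]
      simp only [smul_eq_mul]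
      linarith
    have hge := hpsd.dotProduct_mulVec_nonneg u
    rw [star_trivial] at hge
    linarith
  have hMu : M *ᵥ u = 0 := by
    rw [← hpsd.dotProduct_mulVec_zero_iff u, star_trivial]
    exact h0
  have hfin := hMmul u
  rw [hMu, eq_comm, sub_eq_zero] at hfin
  exact hfin.symm

end LevingerAux

/-- For an irreducible nonnegative matrix `A`, Levinger's function is constant
on `[0,1]` if and only if the Perron vector `x` of `A + Aᵀ` (the positive
eigenvector for the spectral radius of `A + Aᵀ`) lies in the null space of
`A − Aᵀ`. -/
theorem levinger_constant_iff_perron_in_nullspace {n : ℕ}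
    (A : Matrix (Fin n) (Fin n) ℝ)
    (hnn : ∀ i j, 0 ≤ A i j) (hirr : Irred A)
    (x : Fin n → ℝ) (hx : ∀ i, 0 < x i)
    (hev : (A + Aᵀ) *ᵥ x = specRad (A + Aᵀ) • x) :
    (∀ s ∈ Set.Icc (0:ℝ) 1, ∀ t ∈ Set.Icc (0:ℝ) 1,
        specRad ((1 - s) • A + s • Aᵀ) = specRad ((1 - t) • A + t • Aᵀ)) ↔
      (A - Aᵀ) *ᵥ x = 0 := by
  classical
  rcases Nat.eq_zero_or_pos n with hn | hn
  · subst hn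
    constructor
    · intro _
      funext i
      exact i.elim0
    · intro _ s _ t _
      congr 1
      ext i j
      exact i.elim0
  haveI : Nonempty (Fin n) := ⟨⟨0, hn⟩⟩
  set ρ : ℝ := specRad (A + Aᵀ) with hρ
  have hSnn : ∀ i j, 0 ≤ (A + Aᵀ) i j := fun i j => by
    simp only [Matrix.add_apply, Matrix.transpose_apply]
    exact add_nonneg (hnn i j) (hnn j i)
  have hSsym : (A + Aᵀ)ᵀ = A + Aᵀ := by
    rw [Matrix.transpose_add, Matrix.transpose_transpose, add_comm]
  have hSirr : Irred (A + Aᵀ) := by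
    intro i j
    obtain ⟨k, hk⟩ := hirr i j
    refine ⟨k, lt_of_lt_of_le hk (pow_entry_le A (A + Aᵀ) hnn (fun i j => ?_) (k + 1) i j)⟩
    simp only [Matrix.add_apply, Matrix.transpose_apply]
    linarith [hnn j i]
  constructor
  · intro hconst
    have hmid : ((1 - (1/2 : ℝ)) • A + (1/2 : ℝ) • Aᵀ) = (1/2 : ℝ) • (A + Aᵀ) := by
      rw [smul_add]
      norm_num
    have hmidev : ((1/2 : ℝ) • (A + Aᵀ)) *ᵥ x = (ρ/2) • x := by
      rw [Matrix.smul_mulVec, hev, smul_smul]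
      congr 1
      ring
    have hmidnn : ∀ i j, 0 ≤ ((1/2 : ℝ) • (A + Aᵀ)) i j := fun i j => by
      simp only [Matrix.smul_apply, smul_eq_mul]
      linarith [hSnn i j]
    have hmidrad : specRad ((1/2 : ℝ) • (A + Aᵀ)) = ρ/2 :=
      specRad_of_posEig _ hmidnn x hx _ hmidev
    have e0 : ((1 - (0:ℝ)) • A + (0:ℝ) • Aᵀ) = A := by
      simp
    have e1 : ((1 - (1:ℝ)) • A + (1:ℝ) • Aᵀ) = Aᵀ := by
      simp
    have hArad : specRad A = ρ/2 := by
      have h := hconst 0 ⟨le_refl 0, zero_le_one⟩ (1/2) ⟨by norm_num, by norm_num⟩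
      rw [e0, hmid, hmidrad] at h
      exact h
    have hATrad : specRad Aᵀ = ρ/2 := by
      have h := hconst 1 ⟨zero_le_one, le_refl 1⟩ (1/2) ⟨by norm_num, by norm_num⟩
      rw [e1, hmid, hmidrad] at h
      exact h
    have key : ∀ C : Matrix (Fin n) (Fin n) ℝ, (∀ i j, 0 ≤ C i j) → C + Cᵀ = A + Aᵀ →
        specRad C = ρ/2 → ∀ i, ρ/2 * x i ≤ (C *ᵥ x) i := by
      intro C hC hCS hCrad i
      obtain ⟨μ, v, hv, hveq, hμnorm⟩ := exists_attaining_eig C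
      set u : Fin n → ℝ := fun i => ‖v i‖ with hu
      have hunn : ∀ i, 0 ≤ u i := fun i => norm_nonneg _
      have hCu : ∀ i, ρ/2 * u i ≤ (C *ᵥ u) i := by
        intro i
        have h1 : ρ/2 * u i = ‖((C.map (fun x : ℝ => (x : ℂ))) *ᵥ v) i‖ := by
          rw [hveq]
          simp only [Pi.smul_apply, smul_eq_mul, norm_mul, hu]
          rw [hμnorm, hCrad]
        have h2 : ‖((C.map (fun x : ℝ => (x : ℂ))) *ᵥ v) i‖ ≤ (C *ᵥ u) i := by
          rw [Matrix.mulVec, dotProduct, Matrix.mulVec, dotProduct]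
          refine (norm_sum_le _ _).trans ?_
          refine Finset.sum_le_sum fun j _ => ?_
          simp only [Matrix.map_apply, norm_mul, Complex.norm_real, Real.norm_eq_abs,
            abs_of_nonneg (hC i j), hu, le_refl]
        linarith
      have hune : u ≠ 0 := by
        intro h0
        apply hv
        funext j
        have := congrFun h0 j
        simp only [hu, Pi.zero_apply] at this
        exact norm_eq_zero.mp this
      have hray : ρ * (u ⬝ᵥ u) ≤ u ⬝ᵥ ((A + Aᵀ) *ᵥ u) := by
        have h1 : u ⬝ᵥ ((A + Aᵀ) *ᵥ u) = u ⬝ᵥ (C *ᵥ u) + u ⬝ᵥ (Cᵀ *ᵥ u) := by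
          rw [← hCS, Matrix.add_mulVec, dotProduct_add]
        have h2 : u ⬝ᵥ (Cᵀ *ᵥ u) = u ⬝ᵥ (C *ᵥ u) := by
          rw [Matrix.dotProduct_mulVec, Matrix.vecMul_transpose, dotProduct_comm]
        have h3 : ρ/2 * (u ⬝ᵥ u) ≤ u ⬝ᵥ (C *ᵥ u) := by
          rw [dotProduct, dotProduct, Finset.mul_sum]
          refine Finset.sum_le_sum fun j _ => ?_
          have := hCu j
          have h4 : ρ/2 * (u j * u j) = u j * (ρ/2 * u j) := by ring
          rw [h4]
          exact mul_le_mul_of_nonneg_left (hCu j) (hunn j)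
        linarith
      have hSu : (A + Aᵀ) *ᵥ u = ρ • u :=
        sym_eig_of_rayleigh (A + Aᵀ) hSsym hSnn x hx ρ hev u hray
      have hupos := perron_pos _ hSnn hSirr u hunn hune ρ hSu
      obtain ⟨c, hc, hcu⟩ := perron_unique _ hSnn hSirr x hx ρ hev u hupos hSu
      have hfin := hCu i
      rw [hcu, Matrix.mulVec_smul] at hfin
      simp only [Pi.smul_apply, smul_eq_mul] at hfin
      have h5 : c * (ρ/2 * x i) ≤ c * ((C *ᵥ x) i) := by linarith
      exact (mul_le_mul_iff_right₀ hc).mp h5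
    have hA2 := key A hnn rfl hArad
    have hAT2 := key Aᵀ (fun i j => hnn j i)
      (by rw [Matrix.transpose_transpose, add_comm]) hATrad
    funext i
    have hsum : (A *ᵥ x) i + (Aᵀ *ᵥ x) i = ρ * x i := by
      have := congrFun hev i
      simp only [Matrix.add_mulVec, Pi.add_apply, Pi.smul_apply, smul_eq_mul] at this
      linarith
    have h1 := hA2 i
    have h2 := hAT2 i
    simp only [Matrix.sub_mulVec, Pi.sub_apply, Pi.zero_apply]
    linarith
  · intro h s hs t ht
    have hAx : ∀ i, (A *ᵥ x) i = ρ/2 * x i ∧ (Aᵀ *ᵥ x) i = ρ/2 * x i := by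
      intro i
      have h1 : (A *ᵥ x) i - (Aᵀ *ᵥ x) i = 0 := by
        have := congrFun h i
        simpa [Matrix.sub_mulVec] using this
      have h2 : (A *ᵥ x) i + (Aᵀ *ᵥ x) i = ρ * x i := by
        have := congrFun hev i
        simp only [Matrix.add_mulVec, Pi.add_apply, Pi.smul_apply, smul_eq_mul] at this
        linarith
      constructor <;> linarith
    have gen : ∀ r ∈ Set.Icc (0:ℝ) 1, specRad ((1 - r) • A + r • Aᵀ) = ρ/2 := by
      intro r hr
      refine specRad_of_posEig _ (fun i j => ?_) x hx (ρ/2) ?_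
      · simp only [Matrix.add_apply, Matrix.smul_apply, Matrix.transpose_apply, smul_eq_mul]
        have h1 := hnn i j
        have h2 := hnn j i
        have h3 := hr.1
        have h4 := hr.2
        nlinarith
      · funext i
        rw [Matrix.add_mulVec, Matrix.smul_mulVec, Matrix.smul_mulVec]
        simp only [Pi.add_apply, Pi.smul_apply, smul_eq_mul, (hAx i).1, (hAx i).2]
        ring
    rw [gen s hs, gen t ht]
end
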